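/- arXiv:1911.02906 — 6 statements merged into one kernel-verified Lean document; each statement's English description precedes it below -/
import Mathlib

section
/- Let θ > 0, α ∈ (1,2) and z ∈ ℝ with z ≥ −θ. Then the integral ∫₀^∞ (e^{−zu} − 1 + zu) u^{−(1+α)} e^{−θu} du is finite and equals Γ(−α) θ^α ((1 + z/θ)^α − 1 − α z/θ), where Γ denotes the real Gamma function extended to negative non-integer arguments via the recurrence Γ(s) = Γ(s+1)/s. -/
open MeasureTheory Real Set

namespace TSaux
open Filter

lemma gamma_integrable {s c : ℝ} (hs : -1 < s) (hc : 0 < c) :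
    IntegrableOn (fun u : ℝ => u ^ s * Real.exp (-(c * u))) (Ioi 0) := by
  have h := integrableOn_rpow_mul_exp_neg_mul_rpow hs one_pos hc
  simpa [Real.rpow_one, neg_mul] using h

lemma gamma_value {s c : ℝ} (hs : -1 < s) (hc : 0 < c) :
    ∫ u in Ioi (0:ℝ), u ^ s * Real.exp (-(c * u))
      = Real.Gamma (s + 1) * c ^ (-(s + 1)) := by
  have h := Real.integral_rpow_mul_exp_neg_mul_Ioi (a := s + 1) (r := c)
    (by linarith) hc
  simp only [add_sub_cancel_right] at h
  rw [h, one_div, ← Real.rpow_neg_one c, ← Real.rpow_mul hc.le, mul_comm]; norm_num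

lemma exp_diff_le {a b u : ℝ} (ha : 0 ≤ a) (hb : 0 ≤ b) (hu : 0 ≤ u) :
    |Real.exp (-(a * u)) - Real.exp (-(b * u))| ≤ |a - b| * u := by
  wlog hab : a ≤ b generalizing a b
  · rw [abs_sub_comm, abs_sub_comm a b]; exact this hb ha (le_of_not_ge hab)
  have hAB : Real.exp (-(a * u)) * Real.exp (-((b - a) * u)) = Real.exp (-(b * u)) := by
    rw [← Real.exp_add]; ring_nf
  have h1 : Real.exp (-(a * u)) ≤ 1 := Real.exp_le_one_iff.mpr (by nlinarith)
  have h2 : Real.exp (-((b - a) * u)) ≤ 1 := Real.exp_le_one_iff.mpr (by nlinarith)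
  have h3 := Real.add_one_le_exp (-((b - a) * u))
  have h4 := Real.exp_pos (-(a * u))
  have h5 := Real.exp_pos (-((b - a) * u))
  rw [abs_of_nonpos (by linarith : a - b ≤ 0)]
  rw [abs_of_nonneg (by nlinarith : (0:ℝ) ≤ Real.exp (-(a * u)) - Real.exp (-(b * u)))]
  nlinarith

lemma quad_bound {a b u : ℝ} (h : |(b - a) * u| ≤ 1) (hbu : -(b*u) ≤ 0) :
    |Real.exp (-(a * u)) - Real.exp (-(b * u)) - (b - a) * u * Real.exp (-(b * u))|
      ≤ (b - a) ^ 2 * u ^ 2 := by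
  have key : Real.exp (-(a * u)) - Real.exp (-(b * u)) - (b - a) * u * Real.exp (-(b * u))
      = Real.exp (-(b * u)) * (Real.exp ((b - a) * u) - 1 - (b - a) * u) := by
    rw [mul_sub, mul_sub, ← Real.exp_add]; ring_nf
  rw [key, abs_mul, abs_of_nonneg (Real.exp_pos _).le]
  calc Real.exp (-(b * u)) * |Real.exp ((b - a) * u) - 1 - (b - a) * u|
      ≤ 1 * ((b - a) * u) ^ 2 := by
        apply mul_le_mul (Real.exp_le_one_iff.mpr hbu)
          (Real.abs_exp_sub_one_sub_id_le h) (abs_nonneg _) zero_le_one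
    _ = (b - a) ^ 2 * u ^ 2 := by ring

lemma hasDerivAt_exp_neg_mul (c x : ℝ) :
    HasDerivAt (fun u : ℝ => Real.exp (-(c * u))) (-c * Real.exp (-(c * x))) x := by
  have h : HasDerivAt (fun u : ℝ => -(c * u)) (-c) x := by
    simpa [neg_mul] using (hasDerivAt_id x).const_mul (-c)
  simpa [mul_comm] using h.exp

lemma hasDerivAt_mul_exp_neg_mul (c x : ℝ) :
    HasDerivAt (fun u : ℝ => u * Real.exp (-(c * u)))
      (Real.exp (-(c * x)) - c * x * Real.exp (-(c * x))) x := by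
  have h := (hasDerivAt_id x).mul (hasDerivAt_exp_neg_mul c x)
  refine h.congr_deriv ?_; simp [id]; ring

variable {a b α : ℝ}

lemma f_deriv (x : ℝ) :
    HasDerivAt (fun u : ℝ => Real.exp (-(a*u)) - Real.exp (-(b*u)) - (b-a)*u*Real.exp (-(b*u)))
      (-a*Real.exp (-(a*x)) + a*Real.exp (-(b*x)) + (b-a)*b*x*Real.exp (-(b*x))) x := by
  have hfun : (fun u : ℝ => Real.exp (-(a*u)) - Real.exp (-(b*u)) - (b-a)*u*Real.exp (-(b*u)))
      = (fun u : ℝ => Real.exp (-(a*u)) - Real.exp (-(b*u)) - (b-a)*(u*Real.exp (-(b*u)))) := by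
    funext u; ring
  rw [hfun]
  have h := ((hasDerivAt_exp_neg_mul a x).sub (hasDerivAt_exp_neg_mul b x)).sub
    ((hasDerivAt_mul_exp_neg_mul b x).const_mul (b-a))
  refine h.congr_deriv ?_; ring

lemma f'_deriv (x : ℝ) :
    HasDerivAt (fun u : ℝ => -a*Real.exp (-(a*u)) + a*Real.exp (-(b*u)) + (b-a)*b*u*Real.exp (-(b*u)))
      (a^2*Real.exp (-(a*x)) + (b^2-2*a*b)*Real.exp (-(b*x)) - (b-a)*b^2*x*Real.exp (-(b*x))) x := by
  have hfun : (fun u : ℝ => -a*Real.exp (-(a*u)) + a*Real.exp (-(b*u)) + (b-a)*b*u*Real.exp (-(b*u)))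
      = (fun u : ℝ => (-a)*Real.exp (-(a*u)) + a*Real.exp (-(b*u)) + ((b-a)*b)*(u*Real.exp (-(b*u)))) := by
    funext u; ring
  rw [hfun]
  have h := (((hasDerivAt_exp_neg_mul a x).const_mul (-a)).add
      ((hasDerivAt_exp_neg_mul b x).const_mul a)).add
    ((hasDerivAt_mul_exp_neg_mul b x).const_mul ((b-a)*b))
  refine h.congr_deriv ?_; ring

lemma rpow_shift {x : ℝ} (hx : 0 < x) (p : ℝ) : x * x ^ p = x ^ (p + 1) := by
  rw [Real.rpow_add hx, Real.rpow_one]; ring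

lemma int2 (ha : 0 ≤ a) (hb : 0 < b) (h1 : 1 < α) (h2 : α < 2) :
    IntegrableOn (fun u : ℝ =>
      (a^2*Real.exp (-(a*u)) + (b^2-2*a*b)*Real.exp (-(b*u))
        - (b-a)*b^2*u*Real.exp (-(b*u))) * u^(1-α)) (Ioi 0) := by
  have e2 : IntegrableOn (fun u : ℝ => u^(1-α) * Real.exp (-(b*u))) (Ioi 0) :=
    gamma_integrable (by linarith) hb
  have e3 : IntegrableOn (fun u : ℝ => u^(2-α) * Real.exp (-(b*u))) (Ioi 0) :=
    gamma_integrable (by linarith) hb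
  have e1 : IntegrableOn (fun u : ℝ => a^2 * (u^(1-α) * Real.exp (-(a*u)))) (Ioi 0) := by
    rcases ha.eq_or_lt with h | h
    · simp [← h]
    · exact (gamma_integrable (by linarith) h).const_mul _
  have sum := e1.add ((e2.const_mul (b^2-2*a*b)).add (e3.const_mul (-((b-a)*b^2))))
  apply MeasureTheory.IntegrableOn.congr_fun sum ?_ measurableSet_Ioi
  intro u hu
  have hu' : (0:ℝ) < u := hu
  have key : u * u^(1-α) = u^(2-α) := by
    rw [rpow_shift hu', show (1:ℝ)-α+1 = 2-α by ring]
  simp only [Pi.add_apply]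
  calc a ^ 2 * (u ^ (1 - α) * Real.exp (-(a * u)))
        + ((b ^ 2 - 2 * a * b) * (u ^ (1 - α) * Real.exp (-(b * u)))
          + -((b - a) * b ^ 2) * (u ^ (2 - α) * Real.exp (-(b * u))))
      = a ^ 2 * (u ^ (1 - α) * Real.exp (-(a * u)))
        + ((b ^ 2 - 2 * a * b) * (u ^ (1 - α) * Real.exp (-(b * u)))
          + -((b - a) * b ^ 2) * ((u * u ^ (1 - α)) * Real.exp (-(b * u)))) := by rw [key]
    _ = (a^2*Real.exp (-(a*u)) + (b^2-2*a*b)*Real.exp (-(b*u))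
          - (b-a)*b^2*u*Real.exp (-(b*u))) * u^(1-α) := by ring

lemma int1 (ha : 0 ≤ a) (hb : 0 < b) (h1 : 1 < α) (h2 : α < 2) :
    IntegrableOn (fun u : ℝ =>
      (-a * Real.exp (-(a*u)) + a * Real.exp (-(b*u)) + (b-a) * b * u * Real.exp (-(b*u)))
        * u ^ (-α)) (Ioi 0) := by
  have hmeas : Measurable fun u : ℝ =>
      (-a * Real.exp (-(a*u)) + a * Real.exp (-(b*u)) + (b-a) * b * u * Real.exp (-(b*u)))
        * u ^ (-α) := by fun_prop
  rw [← Set.Ioc_union_Ioi_eq_Ioi (zero_le_one : (0:ℝ) ≤ 1)]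
  apply MeasureTheory.IntegrableOn.union
  · apply Integrable.mono'
      (((intervalIntegral.intervalIntegrable_rpow'
        (show (-1:ℝ) < 1-α by linarith) (a := 0) (b := 1)).1).const_mul (|b - a| * (a+b)))
      hmeas.aestronglyMeasurable
    rw [ae_restrict_iff' measurableSet_Ioc]
    refine ae_of_all _ fun u hu => ?_
    obtain ⟨hu0, hu1⟩ := hu
    have hEb : Real.exp (-(b*u)) ≤ 1 := Real.exp_le_one_iff.mpr (by nlinarith)
    have hEbpos := Real.exp_pos (-(b*u))
    have hdiff : |Real.exp (-(b*u)) - Real.exp (-(a*u))| ≤ |b - a| * u :=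
      exp_diff_le hb.le ha hu0.le
    have hfb : |(-a * Real.exp (-(a*u)) + a * Real.exp (-(b*u)) + (b-a) * b * u * Real.exp (-(b*u)))|
        ≤ |b - a| * (a+b) * u := by
      have e1 : -a * Real.exp (-(a*u)) + a * Real.exp (-(b*u)) + (b-a) * b * u * Real.exp (-(b*u))
          = a * (Real.exp (-(b*u)) - Real.exp (-(a*u))) + ((b-a) * b * u) * Real.exp (-(b*u)) := by
        ring
      rw [e1]
      have t1 : |a * (Real.exp (-(b*u)) - Real.exp (-(a*u)))| ≤ a * (|b - a| * u) := by
        rw [abs_mul, abs_of_nonneg ha]; gcongr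
      have t2 : |((b-a) * b * u) * Real.exp (-(b*u))| ≤ (|b - a| * b * u) * 1 := by
        rw [abs_mul, abs_mul, abs_mul, abs_of_nonneg hb.le, abs_of_nonneg hu0.le,
          abs_of_nonneg hEbpos.le]
        gcongr
      calc |a * (Real.exp (-(b*u)) - Real.exp (-(a*u))) + ((b-a) * b * u) * Real.exp (-(b*u))|
          ≤ |a * (Real.exp (-(b*u)) - Real.exp (-(a*u)))| + |((b-a) * b * u) * Real.exp (-(b*u))| :=
            abs_add_le _ _
        _ ≤ a * (|b - a| * u) + (|b - a| * b * u) * 1 := add_le_add t1 t2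
        _ = |b - a| * (a+b) * u := by ring
    have hrp : (0:ℝ) ≤ u ^ (-α) := Real.rpow_nonneg hu0.le _
    have key : u * u ^ (-α) = u ^ (1-α) := by
      rw [rpow_shift hu0, show -α+1 = 1-α by ring]
    rw [norm_mul, Real.norm_eq_abs, Real.norm_eq_abs, abs_of_nonneg hrp]
    calc |(-a * Real.exp (-(a*u)) + a * Real.exp (-(b*u)) + (b-a) * b * u * Real.exp (-(b*u)))| * u ^ (-α)
        ≤ (|b - a| * (a+b) * u) * u ^ (-α) := by gcongr
      _ = |b - a| * (a+b) * (u * u ^ (-α)) := by ring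
      _ = |b - a| * (a+b) * u ^ (1-α) := by rw [key]
  · apply Integrable.mono'
      (((integrableOn_Ioi_rpow_of_lt (show -α < -1 by linarith) one_pos).const_mul (2*a)).add
        (((gamma_integrable (show (-1:ℝ) < 1-α by linarith) hb).mono_set
          (Set.Ioi_subset_Ioi zero_le_one)).const_mul (|b - a| * b)))
      hmeas.aestronglyMeasurable
    rw [ae_restrict_iff' measurableSet_Ioi]
    refine ae_of_all _ fun u hu => ?_
    have hu0 : (0:ℝ) < u := lt_trans one_pos hu
    have hEa : Real.exp (-(a*u)) ≤ 1 := Real.exp_le_one_iff.mpr (by nlinarith)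
    have hEb : Real.exp (-(b*u)) ≤ 1 := Real.exp_le_one_iff.mpr (by nlinarith)
    have hEapos := Real.exp_pos (-(a*u))
    have hEbpos := Real.exp_pos (-(b*u))
    have hrp : (0:ℝ) ≤ u ^ (-α) := Real.rpow_nonneg hu0.le _
    have key : u * u ^ (-α) = u ^ (1-α) := by
      rw [rpow_shift hu0, show -α+1 = 1-α by ring]
    have hfb : |(-a * Real.exp (-(a*u)) + a * Real.exp (-(b*u)) + (b-a) * b * u * Real.exp (-(b*u)))|
        ≤ 2*a + |b - a| * b * (u * Real.exp (-(b*u))) := by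
      have e1 : -a * Real.exp (-(a*u)) + a * Real.exp (-(b*u)) + (b-a) * b * u * Real.exp (-(b*u))
          = a * (Real.exp (-(b*u)) - Real.exp (-(a*u))) + ((b-a) * b) * (u * Real.exp (-(b*u))) := by
        ring
      rw [e1]
      have t1 : |a * (Real.exp (-(b*u)) - Real.exp (-(a*u)))| ≤ a * 2 := by
        rw [abs_mul, abs_of_nonneg ha]
        gcongr
        calc |Real.exp (-(b*u)) - Real.exp (-(a*u))|
            ≤ |Real.exp (-(b*u))| + |Real.exp (-(a*u))| := abs_sub _ _
          _ ≤ 2 := by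
              rw [abs_of_nonneg hEapos.le, abs_of_nonneg hEbpos.le]; linarith
      have t2 : |((b-a) * b) * (u * Real.exp (-(b*u)))| ≤ (|b - a| * b) * (u * Real.exp (-(b*u))) := by
        rw [abs_mul, abs_mul, abs_of_nonneg hb.le,
          abs_of_nonneg (by positivity : (0:ℝ) ≤ u * Real.exp (-(b*u)))]
      calc |a * (Real.exp (-(b*u)) - Real.exp (-(a*u))) + ((b-a) * b) * (u * Real.exp (-(b*u)))|
          ≤ |a * (Real.exp (-(b*u)) - Real.exp (-(a*u)))| + |((b-a) * b) * (u * Real.exp (-(b*u)))| :=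
            abs_add_le _ _
        _ ≤ a * 2 + (|b - a| * b) * (u * Real.exp (-(b*u))) := add_le_add t1 t2
        _ = 2*a + |b - a| * b * (u * Real.exp (-(b*u))) := by ring
    rw [norm_mul, Real.norm_eq_abs, Real.norm_eq_abs, abs_of_nonneg hrp]
    calc |(-a * Real.exp (-(a*u)) + a * Real.exp (-(b*u)) + (b-a) * b * u * Real.exp (-(b*u)))| * u ^ (-α)
        ≤ (2*a + |b - a| * b * (u * Real.exp (-(b*u)))) * u ^ (-α) := by gcongr
      _ = 2*a * u ^ (-α) + |b - a| * b * ((u * u ^ (-α)) * Real.exp (-(b*u))) := by ring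
      _ = 2*a * u ^ (-α) + |b - a| * b * (u ^ (1-α) * Real.exp (-(b*u))) := by rw [key]

lemma int0 (ha : 0 ≤ a) (hb : 0 < b) (h1 : 1 < α) (h2 : α < 2) :
    IntegrableOn (fun u : ℝ =>
      (Real.exp (-(a*u)) - Real.exp (-(b*u)) - (b-a) * u * Real.exp (-(b*u)))
        * u ^ (-α-1)) (Ioi 0) := by
  have hmeas : Measurable fun u : ℝ =>
      (Real.exp (-(a*u)) - Real.exp (-(b*u)) - (b-a) * u * Real.exp (-(b*u)))
        * u ^ (-α-1) := by fun_prop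
  set δ : ℝ := (1 + |b - a|)⁻¹ with hδdef
  have hδpos : 0 < δ := by positivity
  rw [← Set.Ioc_union_Ioi_eq_Ioi hδpos.le]
  apply MeasureTheory.IntegrableOn.union
  · apply Integrable.mono'
      (((intervalIntegral.intervalIntegrable_rpow'
        (show (-1:ℝ) < 1-α by linarith) (a := 0) (b := δ)).1).const_mul ((b - a)^2))
      hmeas.aestronglyMeasurable
    rw [ae_restrict_iff' measurableSet_Ioc]
    refine ae_of_all _ fun u hu => ?_
    obtain ⟨hu0, huδ⟩ := hu
    have habs : |(b - a) * u| ≤ 1 := by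
      rw [abs_mul, abs_of_nonneg hu0.le]
      have h1' : |b - a| * u ≤ |b - a| * δ := by gcongr
      have h2' : |b - a| * δ ≤ 1 := by
        rw [hδdef]
        rw [mul_inv_le_iff₀ (by positivity)]
        nlinarith [abs_nonneg (b - a)]
      linarith
    have hq := quad_bound habs (by nlinarith : -(b*u) ≤ 0)
    have hrp : (0:ℝ) ≤ u ^ (-α-1) := Real.rpow_nonneg hu0.le _
    have key : u^2 * u ^ (-α-1) = u ^ (1-α) := by
      rw [show u^2 = u * u by ring, mul_assoc, rpow_shift hu0, rpow_shift hu0,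
        show -α-1+1+1 = 1-α by ring]
    rw [norm_mul, Real.norm_eq_abs, Real.norm_eq_abs, abs_of_nonneg hrp]
    calc |Real.exp (-(a*u)) - Real.exp (-(b*u)) - (b-a) * u * Real.exp (-(b*u))| * u ^ (-α-1)
        ≤ ((b - a)^2 * u^2) * u ^ (-α-1) := by gcongr
      _ = (b - a)^2 * (u^2 * u ^ (-α-1)) := by ring
      _ = (b - a)^2 * u ^ (1-α) := by rw [key]
  · apply Integrable.mono'
      (((integrableOn_Ioi_rpow_of_lt (show -α-1 < -1 by linarith) hδpos).const_mul 2).add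
        ((integrableOn_Ioi_rpow_of_lt (show -α < -1 by linarith) hδpos).const_mul |b - a|))
      hmeas.aestronglyMeasurable
    rw [ae_restrict_iff' measurableSet_Ioi]
    refine ae_of_all _ fun u hu => ?_
    have hu0 : (0:ℝ) < u := lt_trans hδpos hu
    have hEa : Real.exp (-(a*u)) ≤ 1 := Real.exp_le_one_iff.mpr (by nlinarith)
    have hEb : Real.exp (-(b*u)) ≤ 1 := Real.exp_le_one_iff.mpr (by nlinarith)
    have hEapos := Real.exp_pos (-(a*u))
    have hEbpos := Real.exp_pos (-(b*u))
    have hrp : (0:ℝ) ≤ u ^ (-α-1) := Real.rpow_nonneg hu0.le _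
    have key : u * u ^ (-α-1) = u ^ (-α) := by
      rw [rpow_shift hu0, show -α-1+1 = -α by ring]
    have hfb : |Real.exp (-(a*u)) - Real.exp (-(b*u)) - (b-a) * u * Real.exp (-(b*u))|
        ≤ 2 + |b - a| * u := by
      have t2 : |(b-a) * u * Real.exp (-(b*u))| ≤ |b - a| * u := by
        rw [abs_mul, abs_mul, abs_of_nonneg hu0.le, abs_of_nonneg hEbpos.le]
        calc |b - a| * u * Real.exp (-(b*u)) ≤ |b - a| * u * 1 := by gcongr
          _ = |b - a| * u := by ring
      calc |Real.exp (-(a*u)) - Real.exp (-(b*u)) - (b-a) * u * Real.exp (-(b*u))|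
          ≤ |Real.exp (-(a*u)) - Real.exp (-(b*u))| + |(b-a) * u * Real.exp (-(b*u))| :=
            abs_sub _ _
        _ ≤ 2 + |b - a| * u := by
            refine add_le_add ?_ t2
            calc |Real.exp (-(a*u)) - Real.exp (-(b*u))|
                ≤ |Real.exp (-(a*u))| + |Real.exp (-(b*u))| := abs_sub _ _
              _ ≤ 2 := by rw [abs_of_nonneg hEapos.le, abs_of_nonneg hEbpos.le]; linarith
    rw [norm_mul, Real.norm_eq_abs, Real.norm_eq_abs, abs_of_nonneg hrp]
    calc |Real.exp (-(a*u)) - Real.exp (-(b*u)) - (b-a) * u * Real.exp (-(b*u))| * u ^ (-α-1)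
        ≤ (2 + |b - a| * u) * u ^ (-α-1) := by gcongr
      _ = 2 * u ^ (-α-1) + |b - a| * (u * u ^ (-α-1)) := by ring
      _ = 2 * u ^ (-α-1) + |b - a| * u ^ (-α) := by rw [key]

lemma tendsto_rpow_zero {p : ℝ} (hp : 0 < p) :
    Tendsto (fun u : ℝ => u ^ p) (nhdsWithin 0 (Ioi 0)) (nhds 0) := by
  have h := (Real.continuousAt_rpow_const 0 p (Or.inr hp.le)).tendsto
  rw [Real.zero_rpow hp.ne'] at h
  exact h.mono_left nhdsWithin_le_nhds

lemma ibp1 (ha : 0 ≤ a) (hb : 0 < b) (h1 : 1 < α) (h2 : α < 2)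
    (hi0 : IntegrableOn (fun u : ℝ =>
      (Real.exp (-(a*u)) - Real.exp (-(b*u)) - (b-a) * u * Real.exp (-(b*u)))
        * u ^ (-α-1)) (Ioi 0))
    (hi1 : IntegrableOn (fun u : ℝ =>
      (-a * Real.exp (-(a*u)) + a * Real.exp (-(b*u)) + (b-a) * b * u * Real.exp (-(b*u)))
        * u ^ (-α)) (Ioi 0)) :
    ∫ u in Ioi (0:ℝ),
      (Real.exp (-(a*u)) - Real.exp (-(b*u)) - (b-a) * u * Real.exp (-(b*u))) * u ^ (-α-1)
    = α⁻¹ * ∫ u in Ioi (0:ℝ),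
      (-a * Real.exp (-(a*u)) + a * Real.exp (-(b*u)) + (b-a) * b * u * Real.exp (-(b*u)))
        * u ^ (-α) := by
  have hα0 : α ≠ 0 := by linarith
  set F : ℝ → ℝ := fun u => Real.exp (-(a*u)) - Real.exp (-(b*u)) - (b-a) * u * Real.exp (-(b*u))
    with hF
  set F' : ℝ → ℝ := fun u =>
    -a * Real.exp (-(a*u)) + a * Real.exp (-(b*u)) + (b-a) * b * u * Real.exp (-(b*u)) with hF'
  set V : ℝ → ℝ := fun x => (-α)⁻¹ * x ^ (-α) with hV
  set V' : ℝ → ℝ := fun x => x ^ (-α-1) with hV'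
  have hu : ∀ x ∈ Ioi (0:ℝ), HasDerivAt F (F' x) x := fun x _ => f_deriv x
  have hv : ∀ x ∈ Ioi (0:ℝ), HasDerivAt V (V' x) x := by
    intro x hx
    have h := (Real.hasDerivAt_rpow_const (x := x) (p := -α)
      (Or.inl (ne_of_gt hx))).const_mul ((-α)⁻¹)
    refine h.congr_deriv ?_
    rw [hV']
    field_simp
  have huv' : IntegrableOn (F * V') (Ioi 0) := hi0
  have hu'v : IntegrableOn (F' * V) (Ioi 0) := by
    have h := hi1.const_mul ((-α)⁻¹)
    apply h.congr
    refine Filter.Eventually.of_forall fun x => ?_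
    simp only [Pi.mul_def, hV, hF']
    ring
  -- the boundary limits
  have h_zero : Tendsto (F * V) (nhdsWithin 0 (Ioi 0)) (nhds 0) := by
    set δ : ℝ := (1 + |b - a|)⁻¹ with hδdef
    have hδpos : 0 < δ := by positivity
    refine squeeze_zero_norm' (a := fun u : ℝ => (α⁻¹ * (b-a)^2) * u ^ (2-α)) ?_ ?_
    · filter_upwards [Ioo_mem_nhdsGT_of_mem (Set.mem_Ico.mpr ⟨le_rfl, hδpos⟩)] with u hu'
      obtain ⟨hu0, huδ⟩ := hu'
      have habs : |(b - a) * u| ≤ 1 := by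
        rw [abs_mul, abs_of_nonneg hu0.le]
        have h2' : |b - a| * δ ≤ 1 := by
          rw [hδdef, mul_inv_le_iff₀ (by positivity)]
          nlinarith [abs_nonneg (b - a)]
        nlinarith [abs_nonneg (b - a)]
      have hq := quad_bound habs (by nlinarith : -(b*u) ≤ 0)
      have hrp : (0:ℝ) ≤ u ^ (-α) := Real.rpow_nonneg hu0.le _
      have key : u^2 * u ^ (-α) = u ^ (2-α) := by
        rw [show u^2 = u * u by ring, mul_assoc, rpow_shift hu0, rpow_shift hu0,
          show -α+1+1 = 2-α by ring]
      have : ‖(F * V) u‖ = |F u| * (α⁻¹ * u ^ (-α)) := by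
        simp only [Pi.mul_apply, hV, norm_mul, Real.norm_eq_abs, abs_mul,
          abs_of_nonneg hrp, abs_inv, abs_neg, abs_of_pos (by linarith : (0:ℝ) < α)]
      rw [this]
      calc |F u| * (α⁻¹ * u ^ (-α)) ≤ ((b-a)^2 * u^2) * (α⁻¹ * u ^ (-α)) := by gcongr
        _ = (α⁻¹ * (b-a)^2) * (u^2 * u ^ (-α)) := by ring
        _ = (α⁻¹ * (b-a)^2) * u ^ (2-α) := by rw [key]
    · have h := (tendsto_rpow_zero (show (0:ℝ) < 2-α by linarith)).const_mul (α⁻¹ * (b-a)^2)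
      simpa using h
  have h_top : Tendsto (F * V) atTop (nhds 0) := by
    refine squeeze_zero_norm'
      (a := fun u : ℝ => α⁻¹ * (2 * u ^ (-α) + |b - a| * u ^ (1-α))) ?_ ?_
    · filter_upwards [eventually_gt_atTop (1:ℝ)] with u hu'
      have hu0 : (0:ℝ) < u := lt_trans one_pos hu'
      have hEa : Real.exp (-(a*u)) ≤ 1 := Real.exp_le_one_iff.mpr (by nlinarith)
      have hEb : Real.exp (-(b*u)) ≤ 1 := Real.exp_le_one_iff.mpr (by nlinarith)
      have hEapos := Real.exp_pos (-(a*u))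
      have hEbpos := Real.exp_pos (-(b*u))
      have hrp : (0:ℝ) ≤ u ^ (-α) := Real.rpow_nonneg hu0.le _
      have key : u * u ^ (-α) = u ^ (1-α) := by
        rw [rpow_shift hu0, show -α+1 = 1-α by ring]
      have hfb : |F u| ≤ 2 + |b - a| * u := by
        rw [hF]
        have t2 : |(b-a) * u * Real.exp (-(b*u))| ≤ |b - a| * u := by
          rw [abs_mul, abs_mul, abs_of_nonneg hu0.le, abs_of_nonneg hEbpos.le]
          calc |b - a| * u * Real.exp (-(b*u)) ≤ |b - a| * u * 1 := by gcongr
            _ = |b - a| * u := by ring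
        calc |Real.exp (-(a*u)) - Real.exp (-(b*u)) - (b-a) * u * Real.exp (-(b*u))|
            ≤ |Real.exp (-(a*u)) - Real.exp (-(b*u))| + |(b-a) * u * Real.exp (-(b*u))| :=
              abs_sub _ _
          _ ≤ 2 + |b - a| * u := by
              refine add_le_add ?_ t2
              calc |Real.exp (-(a*u)) - Real.exp (-(b*u))|
                  ≤ |Real.exp (-(a*u))| + |Real.exp (-(b*u))| := abs_sub _ _
                _ ≤ 2 := by rw [abs_of_nonneg hEapos.le, abs_of_nonneg hEbpos.le]; linarith
      have : ‖(F * V) u‖ = |F u| * (α⁻¹ * u ^ (-α)) := by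
        simp only [Pi.mul_apply, hV, norm_mul, Real.norm_eq_abs, abs_mul,
          abs_of_nonneg hrp, abs_inv, abs_neg, abs_of_pos (by linarith : (0:ℝ) < α)]
      rw [this]
      calc |F u| * (α⁻¹ * u ^ (-α)) ≤ (2 + |b - a| * u) * (α⁻¹ * u ^ (-α)) := by gcongr
        _ = α⁻¹ * (2 * u ^ (-α) + |b - a| * (u * u ^ (-α))) := by ring
        _ = α⁻¹ * (2 * u ^ (-α) + |b - a| * u ^ (1-α)) := by rw [key]
    · have t1 : Tendsto (fun u : ℝ => u ^ (-α)) atTop (nhds 0) :=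
        tendsto_rpow_neg_atTop (by linarith)
      have t2 : Tendsto (fun u : ℝ => u ^ (1-α)) atTop (nhds 0) := by
        have h := tendsto_rpow_neg_atTop (show (0:ℝ) < α - 1 by linarith)
        refine h.congr' ?_
        filter_upwards with u
        norm_num
      have := (((t1.const_mul 2).add (t2.const_mul |b - a|)).const_mul α⁻¹)
      simpa using this
  have key := MeasureTheory.integral_Ioi_mul_deriv_eq_deriv_mul hu hv huv' hu'v h_zero h_top
  have e1 : ∫ x in Ioi (0:ℝ), F' x * V x
      = (-α)⁻¹ * ∫ x in Ioi (0:ℝ), F' x * x ^ (-α) := by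
    rw [← MeasureTheory.integral_const_mul]
    refine setIntegral_congr_fun measurableSet_Ioi fun x _ => ?_
    simp only [hV]; ring
  have goal_eq : (∫ u in Ioi (0:ℝ),
      (Real.exp (-(a*u)) - Real.exp (-(b*u)) - (b-a) * u * Real.exp (-(b*u))) * u ^ (-α-1))
      = ∫ x in Ioi (0:ℝ), F x * V' x := rfl
  have s_eq : (∫ x in Ioi (0:ℝ), F' x * x ^ (-α)) = ∫ u in Ioi (0:ℝ),
      (-a * Real.exp (-(a*u)) + a * Real.exp (-(b*u)) + (b-a) * b * u * Real.exp (-(b*u)))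
        * u ^ (-α) := rfl
  rw [goal_eq, key, e1, s_eq, inv_neg]
  ring

lemma ibp2 (ha : 0 ≤ a) (hb : 0 < b) (h1 : 1 < α) (h2 : α < 2)
    (hi1 : IntegrableOn (fun u : ℝ =>
      (-a * Real.exp (-(a*u)) + a * Real.exp (-(b*u)) + (b-a) * b * u * Real.exp (-(b*u)))
        * u ^ (-α)) (Ioi 0))
    (hi2 : IntegrableOn (fun u : ℝ =>
      (a^2 * Real.exp (-(a*u)) + (b^2-2*a*b) * Real.exp (-(b*u))
        - (b-a) * b^2 * u * Real.exp (-(b*u))) * u ^ (1-α)) (Ioi 0)) :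
    ∫ u in Ioi (0:ℝ),
      (-a * Real.exp (-(a*u)) + a * Real.exp (-(b*u)) + (b-a) * b * u * Real.exp (-(b*u)))
        * u ^ (-α)
    = (α-1)⁻¹ * ∫ u in Ioi (0:ℝ),
      (a^2 * Real.exp (-(a*u)) + (b^2-2*a*b) * Real.exp (-(b*u))
        - (b-a) * b^2 * u * Real.exp (-(b*u))) * u ^ (1-α) := by
  have hα1 : (1:ℝ) - α ≠ 0 := by intro h; apply absurd h; intro h'; linarith [h1]
  set F : ℝ → ℝ := fun u =>
    -a * Real.exp (-(a*u)) + a * Real.exp (-(b*u)) + (b-a) * b * u * Real.exp (-(b*u)) with hF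
  set F' : ℝ → ℝ := fun u =>
    a^2 * Real.exp (-(a*u)) + (b^2-2*a*b) * Real.exp (-(b*u))
      - (b-a) * b^2 * u * Real.exp (-(b*u)) with hF'
  set V : ℝ → ℝ := fun x => (1-α)⁻¹ * x ^ (1-α) with hV
  set V' : ℝ → ℝ := fun x => x ^ (-α) with hV'
  have hu : ∀ x ∈ Ioi (0:ℝ), HasDerivAt F (F' x) x := fun x _ => f'_deriv x
  have hv : ∀ x ∈ Ioi (0:ℝ), HasDerivAt V (V' x) x := by
    intro x hx
    have h := (Real.hasDerivAt_rpow_const (x := x) (p := 1-α)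
      (Or.inl (ne_of_gt hx))).const_mul ((1-α)⁻¹)
    refine h.congr_deriv ?_
    rw [hV', show (1:ℝ)-α-1 = -α by ring]
    field_simp
  have huv' : IntegrableOn (F * V') (Ioi 0) := hi1
  have hu'v : IntegrableOn (F' * V) (Ioi 0) := by
    have h := hi2.const_mul ((1-α)⁻¹)
    apply h.congr
    refine Filter.Eventually.of_forall fun x => ?_
    simp only [Pi.mul_def, hV, hF']
    ring
  have habs1α : |(1:ℝ)-α| = α - 1 := by rw [abs_of_nonpos (by linarith)]; ring
  have hbound : ∀ u : ℝ, 0 < u → |F u| ≤ |b - a| * (a+b) * u := by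
    intro u hu0
    simp only [hF]
    have hEb : Real.exp (-(b*u)) ≤ 1 := Real.exp_le_one_iff.mpr (by nlinarith)
    have hEbpos := Real.exp_pos (-(b*u))
    have hdiff : |Real.exp (-(b*u)) - Real.exp (-(a*u))| ≤ |b - a| * u :=
      exp_diff_le hb.le ha hu0.le
    have e1 : -a * Real.exp (-(a*u)) + a * Real.exp (-(b*u)) + (b-a) * b * u * Real.exp (-(b*u))
        = a * (Real.exp (-(b*u)) - Real.exp (-(a*u))) + ((b-a) * b * u) * Real.exp (-(b*u)) := by
      ring
    rw [e1]
    have t1 : |a * (Real.exp (-(b*u)) - Real.exp (-(a*u)))| ≤ a * (|b - a| * u) := by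
      rw [abs_mul, abs_of_nonneg ha]; gcongr
    have t2 : |((b-a) * b * u) * Real.exp (-(b*u))| ≤ (|b - a| * b * u) * 1 := by
      rw [abs_mul, abs_mul, abs_mul, abs_of_nonneg hb.le, abs_of_nonneg hu0.le,
        abs_of_nonneg hEbpos.le]
      gcongr
    calc |a * (Real.exp (-(b*u)) - Real.exp (-(a*u))) + ((b-a) * b * u) * Real.exp (-(b*u))|
        ≤ |a * (Real.exp (-(b*u)) - Real.exp (-(a*u)))| + |((b-a) * b * u) * Real.exp (-(b*u))| :=
          abs_add_le _ _
      _ ≤ a * (|b - a| * u) + (|b - a| * b * u) * 1 := add_le_add t1 t2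
      _ = |b - a| * (a+b) * u := by ring
  have h_zero : Tendsto (F * V) (nhdsWithin 0 (Ioi 0)) (nhds 0) := by
    refine squeeze_zero_norm'
      (a := fun u : ℝ => ((α-1)⁻¹ * (|b - a| * (a+b))) * u ^ (2-α)) ?_ ?_
    · filter_upwards [self_mem_nhdsWithin] with u hu0
      have hu0' : (0:ℝ) < u := hu0
      have hrp : (0:ℝ) ≤ u ^ (1-α) := Real.rpow_nonneg hu0'.le _
      have key : u * u ^ (1-α) = u ^ (2-α) := by
        rw [rpow_shift hu0', show (1:ℝ)-α+1 = 2-α by ring]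
      have hn : ‖(F * V) u‖ = |F u| * ((α-1)⁻¹ * u ^ (1-α)) := by
        simp only [Pi.mul_apply, hV, norm_mul, Real.norm_eq_abs, abs_mul,
          abs_of_nonneg hrp, abs_inv, habs1α]
      rw [hn]
      calc |F u| * ((α-1)⁻¹ * u ^ (1-α))
          ≤ (|b - a| * (a+b) * u) * ((α-1)⁻¹ * u ^ (1-α)) :=
            mul_le_mul_of_nonneg_right (hbound u hu0')
              (mul_nonneg (inv_nonneg.mpr (by linarith)) hrp)
        _ = ((α-1)⁻¹ * (|b - a| * (a+b))) * (u * u ^ (1-α)) := by ring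
        _ = ((α-1)⁻¹ * (|b - a| * (a+b))) * u ^ (2-α) := by rw [key]
    · have h := (tendsto_rpow_zero (show (0:ℝ) < 2-α by linarith)).const_mul
        ((α-1)⁻¹ * (|b - a| * (a+b)))
      simpa using h
  have h_top : Tendsto (F * V) atTop (nhds 0) := by
    refine squeeze_zero_norm'
      (a := fun u : ℝ => (α-1)⁻¹ * ((2*a) * u ^ (1-α)
        + (|b - a| * b) * (u ^ (2-α) * Real.exp (-(b*u))))) ?_ ?_
    · filter_upwards [eventually_gt_atTop (0:ℝ)] with u hu0
      have hEa : Real.exp (-(a*u)) ≤ 1 := Real.exp_le_one_iff.mpr (by nlinarith)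
      have hEb : Real.exp (-(b*u)) ≤ 1 := Real.exp_le_one_iff.mpr (by nlinarith)
      have hEapos := Real.exp_pos (-(a*u))
      have hEbpos := Real.exp_pos (-(b*u))
      have hrp : (0:ℝ) ≤ u ^ (1-α) := Real.rpow_nonneg hu0.le _
      have key : u * u ^ (1-α) = u ^ (2-α) := by
        rw [rpow_shift hu0, show (1:ℝ)-α+1 = 2-α by ring]
      have hfb : |F u| ≤ 2*a + |b - a| * b * (u * Real.exp (-(b*u))) := by
        simp only [hF]
        have e1 : -a * Real.exp (-(a*u)) + a * Real.exp (-(b*u)) + (b-a) * b * u * Real.exp (-(b*u))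
            = a * (Real.exp (-(b*u)) - Real.exp (-(a*u))) + ((b-a) * b) * (u * Real.exp (-(b*u))) := by
          ring
        rw [e1]
        have t1 : |a * (Real.exp (-(b*u)) - Real.exp (-(a*u)))| ≤ a * 2 := by
          rw [abs_mul, abs_of_nonneg ha]
          gcongr
          calc |Real.exp (-(b*u)) - Real.exp (-(a*u))|
              ≤ |Real.exp (-(b*u))| + |Real.exp (-(a*u))| := abs_sub _ _
            _ ≤ 2 := by rw [abs_of_nonneg hEapos.le, abs_of_nonneg hEbpos.le]; linarith
        have t2 : |((b-a) * b) * (u * Real.exp (-(b*u)))|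
            ≤ (|b - a| * b) * (u * Real.exp (-(b*u))) := by
          rw [abs_mul, abs_mul, abs_of_nonneg hb.le,
            abs_of_nonneg (by positivity : (0:ℝ) ≤ u * Real.exp (-(b*u)))]
        calc |a * (Real.exp (-(b*u)) - Real.exp (-(a*u))) + ((b-a) * b) * (u * Real.exp (-(b*u)))|
            ≤ |a * (Real.exp (-(b*u)) - Real.exp (-(a*u)))|
              + |((b-a) * b) * (u * Real.exp (-(b*u)))| := abs_add_le _ _
          _ ≤ a * 2 + (|b - a| * b) * (u * Real.exp (-(b*u))) := add_le_add t1 t2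
          _ = 2*a + |b - a| * b * (u * Real.exp (-(b*u))) := by ring
      have hn : ‖(F * V) u‖ = |F u| * ((α-1)⁻¹ * u ^ (1-α)) := by
        simp only [Pi.mul_apply, hV, norm_mul, Real.norm_eq_abs, abs_mul,
          abs_of_nonneg hrp, abs_inv, habs1α]
      rw [hn]
      calc |F u| * ((α-1)⁻¹ * u ^ (1-α))
          ≤ (2*a + |b - a| * b * (u * Real.exp (-(b*u)))) * ((α-1)⁻¹ * u ^ (1-α)) :=
            mul_le_mul_of_nonneg_right hfb
              (mul_nonneg (inv_nonneg.mpr (by linarith)) hrp)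
        _ = (α-1)⁻¹ * ((2*a) * u ^ (1-α)
            + (|b - a| * b) * ((u * u ^ (1-α)) * Real.exp (-(b*u)))) := by ring
        _ = (α-1)⁻¹ * ((2*a) * u ^ (1-α)
            + (|b - a| * b) * (u ^ (2-α) * Real.exp (-(b*u)))) := by rw [key]
    · have t1 : Tendsto (fun u : ℝ => u ^ (1-α)) atTop (nhds 0) := by
        have h := tendsto_rpow_neg_atTop (show (0:ℝ) < α - 1 by linarith)
        refine h.congr' ?_
        filter_upwards with u
        norm_num
      have t2 : Tendsto (fun u : ℝ => u ^ (2-α) * Real.exp (-(b*u))) atTop (nhds 0) := by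
        have h := tendsto_rpow_mul_exp_neg_mul_atTop_nhds_zero (2-α) b hb
        refine h.congr' ?_
        filter_upwards with u
        rw [neg_mul]
      have := (((t1.const_mul (2*a)).add (t2.const_mul (|b - a| * b))).const_mul ((α-1)⁻¹))
      simpa using this
  have key := MeasureTheory.integral_Ioi_mul_deriv_eq_deriv_mul hu hv huv' hu'v h_zero h_top
  have e1 : ∫ x in Ioi (0:ℝ), F' x * V x
      = (1-α)⁻¹ * ∫ x in Ioi (0:ℝ), F' x * x ^ (1-α) := by
    rw [← MeasureTheory.integral_const_mul]
    refine setIntegral_congr_fun measurableSet_Ioi fun x _ => ?_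
    simp only [hV]; ring
  have goal_eq : (∫ u in Ioi (0:ℝ),
      (-a * Real.exp (-(a*u)) + a * Real.exp (-(b*u)) + (b-a) * b * u * Real.exp (-(b*u)))
        * u ^ (-α)) = ∫ x in Ioi (0:ℝ), F x * V' x := rfl
  have s_eq : (∫ x in Ioi (0:ℝ), F' x * x ^ (1-α)) = ∫ u in Ioi (0:ℝ),
      (a^2 * Real.exp (-(a*u)) + (b^2-2*a*b) * Real.exp (-(b*u))
        - (b-a) * b^2 * u * Real.exp (-(b*u))) * u ^ (1-α) := rfl
  rw [goal_eq, key, e1, s_eq, show (1:ℝ)-α = -(α-1) by ring, inv_neg]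
  ring

lemma val2 (ha : 0 ≤ a) (hb : 0 < b) (h1 : 1 < α) (h2 : α < 2) :
    ∫ u in Ioi (0:ℝ),
      (a^2 * Real.exp (-(a*u)) + (b^2-2*a*b) * Real.exp (-(b*u))
        - (b-a) * b^2 * u * Real.exp (-(b*u))) * u ^ (1-α)
    = Real.Gamma (2-α) * (a ^ α + ((α-1)*b - α*a) * b ^ (α-1)) := by
  have hsplit : ∫ u in Ioi (0:ℝ),
      (a^2 * Real.exp (-(a*u)) + (b^2-2*a*b) * Real.exp (-(b*u))
        - (b-a) * b^2 * u * Real.exp (-(b*u))) * u ^ (1-α)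
    = ∫ u in Ioi (0:ℝ), (a^2 * (u ^ (1-α) * Real.exp (-(a*u)))
        + ((b^2-2*a*b) * (u ^ (1-α) * Real.exp (-(b*u)))
          + (-((b-a)*b^2)) * (u ^ (2-α) * Real.exp (-(b*u))))) := by
    refine setIntegral_congr_fun measurableSet_Ioi fun u hu => ?_
    have hu0 : (0:ℝ) < u := hu
    have key : u * u ^ (1-α) = u ^ (2-α) := by
      rw [rpow_shift hu0, show (1:ℝ)-α+1 = 2-α by ring]
    rw [← key]; ring
  rw [hsplit]
  have e2 : IntegrableOn (fun u : ℝ => u ^ (1-α) * Real.exp (-(b*u))) (Ioi 0) :=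
    gamma_integrable (by linarith) hb
  have e3 : IntegrableOn (fun u : ℝ => u ^ (2-α) * Real.exp (-(b*u))) (Ioi 0) :=
    gamma_integrable (by linarith) hb
  have e1 : IntegrableOn (fun u : ℝ => a^2 * (u ^ (1-α) * Real.exp (-(a*u)))) (Ioi 0) := by
    rcases ha.eq_or_lt with h | h
    · simp [← h]
    · exact (gamma_integrable (by linarith) h).const_mul _
  have hg2 : IntegrableOn (fun u : ℝ => (b^2-2*a*b) * (u ^ (1-α) * Real.exp (-(b*u)))) (Ioi 0) :=
    e2.const_mul _
  have hg3 : IntegrableOn (fun u : ℝ => (-((b-a)*b^2)) * (u ^ (2-α) * Real.exp (-(b*u)))) (Ioi 0) :=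
    e3.const_mul _
  have hrest : IntegrableOn (fun u : ℝ => (b^2-2*a*b) * (u ^ (1-α) * Real.exp (-(b*u)))
      + (-((b-a)*b^2)) * (u ^ (2-α) * Real.exp (-(b*u)))) (Ioi 0) := by
    exact hg2.add hg3
  rw [MeasureTheory.integral_add e1 hrest,
    MeasureTheory.integral_add hg2 hg3,
    MeasureTheory.integral_const_mul, MeasureTheory.integral_const_mul,
    MeasureTheory.integral_const_mul]
  rw [gamma_value (show (-1:ℝ) < 1-α by linarith) hb,
    gamma_value (show (-1:ℝ) < 2-α by linarith) hb]
  have hΓ3 : Real.Gamma (2-α+1) = (2-α) * Real.Gamma (2-α) :=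
    Real.Gamma_add_one (by intro h; rw [sub_eq_zero] at h; linarith)
  rw [hΓ3, show (1:ℝ)-α+1 = 2-α by ring]
  rw [show -((2:ℝ)-α) = α-2 by ring, show -((2:ℝ)-α+1) = α-3 by ring]
  have hbne := hb.ne'
  have hb1 : b ^ (α-2) = b ^ (α-1) * b⁻¹ := by
    rw [show α-2 = (α-1) + (-1) by ring, Real.rpow_add hb, Real.rpow_neg_one]
  have hb2 : b ^ (α-3) = b ^ (α-1) * b⁻¹ * b⁻¹ := by
    rw [show α-3 = (α-1) + (-1) + (-1) by ring, Real.rpow_add hb, Real.rpow_add hb,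
      Real.rpow_neg_one]
  rcases ha.eq_or_lt with h0 | hpos
  · subst h0
    rw [Real.zero_rpow (show α ≠ 0 by linarith)]
    norm_num
    rw [hb1, hb2]
    field_simp
    ring
  · rw [gamma_value (show (-1:ℝ) < 1-α by linarith) hpos,
      show (1:ℝ)-α+1 = 2-α by ring, show -((2:ℝ)-α) = α-2 by ring]
    have haa : a^2 * a ^ (α-2) = a ^ α := by
      rw [← Real.rpow_natCast a 2, ← Real.rpow_add hpos]
      norm_num
    rw [← haa, hb1, hb2]
    field_simp
    ring

end TSaux

open TSaux in
/-- Closed-form evaluation of the tempered α-stable jump integral. -/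
theorem stmt_0 (θ α z : ℝ) (hθ : 0 < θ) (hα : α ∈ Set.Ioo (1:ℝ) 2) (hz : -θ ≤ z) :
    IntegrableOn
      (fun u : ℝ => (Real.exp (-z * u) - 1 + z * u) * u ^ (-(1 + α)) * Real.exp (-θ * u))
      (Set.Ioi 0) ∧
    (∫ u in Set.Ioi (0:ℝ),
        (Real.exp (-z * u) - 1 + z * u) * u ^ (-(1 + α)) * Real.exp (-θ * u))
      = Real.Gamma (-α) * θ ^ α * ((1 + z / θ) ^ α - 1 - α * (z / θ)) := by
  obtain ⟨h1, h2⟩ := hα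
  have ha : (0:ℝ) ≤ θ + z := by linarith
  have hα0 : α ≠ 0 := by linarith
  have hα1 : α - 1 ≠ 0 := by intro h; rw [sub_eq_zero] at h; exact absurd h.symm (by linarith)
  have hEqOn : EqOn
      (fun u : ℝ => (Real.exp (-((θ+z)*u)) - Real.exp (-(θ*u))
        - (θ - (θ+z)) * u * Real.exp (-(θ*u))) * u ^ (-α-1))
      (fun u : ℝ => (Real.exp (-z * u) - 1 + z * u) * u ^ (-(1 + α)) * Real.exp (-θ * u))
      (Set.Ioi 0) := by
    intro u hu
    simp only [neg_mul]
    have hexp : Real.exp (-((θ+z)*u)) = Real.exp (-(z*u)) * Real.exp (-(θ*u)) := by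
      rw [← Real.exp_add]; ring_nf
    rw [hexp, show -(1+α) = -α-1 by ring]
    ring
  have hi0 := int0 ha hθ h1 h2
  have hi1 := int1 ha hθ h1 h2
  have hi2 := int2 ha hθ h1 h2
  constructor
  · exact hi0.congr_fun hEqOn measurableSet_Ioi
  · have hIntEq : (∫ u in Set.Ioi (0:ℝ),
        (Real.exp (-z * u) - 1 + z * u) * u ^ (-(1 + α)) * Real.exp (-θ * u))
        = ∫ u in Set.Ioi (0:ℝ), (Real.exp (-((θ+z)*u)) - Real.exp (-(θ*u))
          - (θ - (θ+z)) * u * Real.exp (-(θ*u))) * u ^ (-α-1) :=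
      (setIntegral_congr_fun measurableSet_Ioi hEqOn).symm
    rw [hIntEq, ibp1 ha hθ h1 h2 hi0 hi1, ibp2 ha hθ h1 h2 hi1 hi2, val2 ha hθ h1 h2]
    have hΓ : Real.Gamma (2-α) = α * (α-1) * Real.Gamma (-α) := by
      have e1 : Real.Gamma (-α+1) = -α * Real.Gamma (-α) :=
        Real.Gamma_add_one (by simpa using hα0)
      have e2 : Real.Gamma (-α+1+1) = (-α+1) * Real.Gamma (-α+1) :=
        Real.Gamma_add_one (by intro h; apply hα1; linarith)
      rw [show (2:ℝ)-α = -α+1+1 by ring, e2, e1]; ring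
    have hθ1 : θ ^ (α-1) = θ ^ α / θ := Real.rpow_sub_one hθ.ne' α
    have hdiv : (1 + z/θ) ^ α = (θ+z) ^ α / θ ^ α := by
      rw [show 1 + z/θ = (θ+z)/θ by field_simp, Real.div_rpow ha hθ.le]
    have hθα : (0:ℝ) < θ ^ α := Real.rpow_pos_of_pos hθ α
    rw [hΓ, hθ1, hdiv]
    field_simp
    ring
end

section
/- Let θ > 0, α ∈ (1,2) and z ∈ ℝ with |z| < θ. Then ∫₀^∞ (e^{−zu} − 1 + zu) u^{−(1+α)} e^{−θu} du = Σ_{n=2}^∞ ((−z)^n / n!) Γ(n − α) θ^{α−n}, where the series on the right-hand side converges absolutely. -/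
open MeasureTheory Real Set

private lemma aux_integrable {a b : ℝ} (ha : 0 < a) (hb : 0 < b) :
    IntegrableOn (fun u : ℝ => u ^ (a - 1) * Real.exp (-(b * u))) (Set.Ioi 0) := by
  have := integrableOn_rpow_mul_exp_neg_mul_rpow (p := 1) (s := a - 1) (b := b)
    (by linarith) zero_lt_one hb
  simpa [Real.rpow_one, neg_mul] using this

private lemma exp_sub_sum (x : ℝ) :
    (∑' n : ℕ, x ^ (n + 2) / (Nat.factorial (n + 2) : ℝ)) = Real.exp x - 1 - x := by
  have h : HasSum (fun n : ℕ => x ^ n / (Nat.factorial n : ℝ)) (Real.exp x) := by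
    rw [Real.exp_eq_exp_ℝ]
    exact NormedSpace.expSeries_div_hasSum_exp x
  have h2 := (hasSum_nat_add_iff' 2).mpr h
  have : (∑ i ∈ Finset.range 2, x ^ i / (Nat.factorial i : ℝ)) = 1 + x := by
    simp [Finset.sum_range_succ]
  rw [this] at h2
  rw [h2.tsum_eq]; ring

/-- Series expansion of the tempered α-stable jump integral for |z| < θ. -/
theorem stmt_1 (θ α z : ℝ) (hθ : 0 < θ) (hα : α ∈ Set.Ioo (1:ℝ) 2) (hz : |z| < θ) :
    Summable (fun n : ℕ =>
      |(-z) ^ (n + 2) / (Nat.factorial (n + 2) : ℝ) * Real.Gamma (((n : ℝ) + 2) - α) *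
        θ ^ (α - ((n : ℝ) + 2))|) ∧
    (∫ u in Set.Ioi (0:ℝ),
        (Real.exp (-z * u) - 1 + z * u) * u ^ (-(1 + α)) * Real.exp (-θ * u))
      = ∑' n : ℕ, (-z) ^ (n + 2) / (Nat.factorial (n + 2) : ℝ) *
          Real.Gamma (((n : ℝ) + 2) - α) * θ ^ (α - ((n : ℝ) + 2)) := by
  obtain ⟨hα1, hα2⟩ := hα
  have hpos : ∀ n : ℕ, (0:ℝ) < ((n:ℝ) + 2) - α := fun n => by
    have : (0:ℝ) ≤ (n:ℝ) := n.cast_nonneg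
    linarith
  set f : ℕ → ℝ := fun n => (-z) ^ (n + 2) / (Nat.factorial (n + 2) : ℝ) *
      Real.Gamma (((n : ℝ) + 2) - α) * θ ^ (α - ((n : ℝ) + 2)) with hf
  have habs : ∀ n, |f n| = |z| ^ (n + 2) / (Nat.factorial (n + 2) : ℝ) *
      Real.Gamma (((n : ℝ) + 2) - α) * θ ^ (α - ((n : ℝ) + 2)) := by
    intro n
    rw [hf]
    rw [abs_mul, abs_mul, abs_div, abs_pow, abs_neg,
      abs_of_pos (Real.Gamma_pos_of_pos (hpos n)),
      abs_of_pos (Real.rpow_pos_of_pos hθ _), Nat.abs_cast]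
  have hq1 : |z| / θ < 1 := (div_lt_one hθ).mpr hz
  have hratio : ∀ n : ℕ, |f (n + 1)| ≤ (|z| / θ) * |f n| := by
    intro n
    have hkey : |f (n + 1)| = ((|z| / θ) * |f n|) * ((((n:ℝ) + 2) - α) / ((n:ℝ) + 3)) := by
      rw [habs, habs]
      have hg : Real.Gamma (((n:ℝ) + 1 + 2) - α) = (((n:ℝ) + 2) - α) *
          Real.Gamma (((n:ℝ) + 2) - α) := by
        have := Real.Gamma_add_one (ne_of_gt (hpos n))
        rw [show ((n:ℝ) + 1 + 2) - α = (((n:ℝ) + 2) - α) + 1 by ring]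
        exact this
      have hrp : θ ^ (α - ((n:ℝ) + 1 + 2)) = θ ^ (α - ((n:ℝ) + 2)) * θ⁻¹ := by
        rw [show α - ((n:ℝ) + 1 + 2) = (α - ((n:ℝ) + 2)) + (-1) by ring,
          Real.rpow_add hθ, Real.rpow_neg_one]
      have hfac : (Nat.factorial (n + 1 + 2) : ℝ) = ((n:ℝ) + 3) * (Nat.factorial (n + 2)) := by
        rw [show n + 1 + 2 = (n + 2) + 1 by ring, Nat.factorial_succ]
        push_cast; ring
      push_cast [hg, hrp, hfac]
      have hθ' : θ ≠ 0 := ne_of_gt hθ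
      have hfa : (Nat.factorial (n + 2) : ℝ) ≠ 0 := by positivity
      have h3 : ((n:ℝ) + 3) ≠ 0 := by positivity
      field_simp
      ring
    rw [hkey]
    apply mul_le_of_le_one_right
    · positivity
    · rw [div_le_one (by positivity)]
      linarith
  have hsum : Summable fun n => |f n| := by
    refine summable_of_ratio_norm_eventually_le hq1 (Filter.Eventually.of_forall fun n => ?_)
    simpa [Real.norm_eq_abs, abs_abs] using hratio n
  refine ⟨hsum, ?_⟩
  -- the series of functions
  set g : ℕ → ℝ → ℝ := fun n u => (-z) ^ (n + 2) / (Nat.factorial (n + 2) : ℝ) *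
      (u ^ ((((n:ℝ) + 2) - α) - 1) * Real.exp (-(θ * u))) with hgdef
  have hgint : ∀ n, IntegrableOn (g n) (Set.Ioi 0) := fun n =>
    (aux_integrable (hpos n) hθ).const_mul _
  have hgval : ∀ n, (∫ u in Set.Ioi (0:ℝ), g n u) = f n := by
    intro n
    rw [hgdef]
    simp only
    rw [MeasureTheory.integral_const_mul, integral_rpow_mul_exp_neg_mul_Ioi (hpos n) hθ]
    rw [one_div, Real.inv_rpow hθ.le, ← Real.rpow_neg hθ.le, neg_sub]
    rw [hf]; ring
  have hgnorm : ∀ n, (∫ u in Set.Ioi (0:ℝ), ‖g n u‖) = |f n| := by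
    intro n
    have : ∀ u ∈ Set.Ioi (0:ℝ), ‖g n u‖ =
        |z| ^ (n + 2) / (Nat.factorial (n + 2) : ℝ) *
          (u ^ ((((n:ℝ) + 2) - α) - 1) * Real.exp (-(θ * u))) := by
      intro u hu
      have hu' : (0:ℝ) < u := hu
      rw [hgdef]
      simp only [Real.norm_eq_abs, abs_mul, abs_div, abs_pow, abs_neg, Nat.abs_cast,
        abs_of_nonneg (Real.rpow_nonneg hu'.le _), abs_of_pos (Real.exp_pos _)]
    rw [MeasureTheory.setIntegral_congr_fun measurableSet_Ioi this,
      MeasureTheory.integral_const_mul, integral_rpow_mul_exp_neg_mul_Ioi (hpos n) hθ,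
      one_div, Real.inv_rpow hθ.le, ← Real.rpow_neg hθ.le, neg_sub, habs]
    ring
  have hsum2 : Summable fun n => ∫ u in Set.Ioi (0:ℝ), ‖g n u‖ := by
    simp only [hgnorm]; exact hsum
  have hinterchange := MeasureTheory.integral_tsum_of_summable_integral_norm hgint hsum2
  have hpt : ∀ u ∈ Set.Ioi (0:ℝ),
      (Real.exp (-z * u) - 1 + z * u) * u ^ (-(1 + α)) * Real.exp (-θ * u)
        = ∑' n, g n u := by
    intro u hu
    have hu' : (0:ℝ) < u := hu
    have hrw : ∀ n : ℕ, g n u =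
        ((-z * u) ^ (n + 2) / (Nat.factorial (n + 2) : ℝ)) *
          (u ^ (-(1 + α)) * Real.exp (-(θ * u))) := by
      intro n
      rw [hgdef]
      simp only
      have h1 : u ^ ((((n:ℝ) + 2) - α) - 1) = u ^ (n + 2 : ℕ) * u ^ (-(1 + α)) := by
        rw [← Real.rpow_natCast u (n + 2), ← Real.rpow_add hu']
        norm_num
        ring_nf
      rw [h1, mul_pow]
      ring
    rw [tsum_congr hrw, tsum_mul_right, exp_sub_sum]
    rw [neg_mul θ u]
    ring
  rw [MeasureTheory.setIntegral_congr_fun measurableSet_Ioi hpt, ← hinterchange]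
  exact tsum_congr hgval
end

section
/- Let L ∈ ℝ with L ≤ 0 and let φ : [L, ∞) → ℝ be convex, continuously differentiable and satisfy φ(0) = 0. Fix q ≥ 0 and set p_q := inf{ y ∈ [L, ∞) : φ(y) ≤ q } (this set contains 0, so p_q ∈ [L, 0] and φ(p_q) ≤ q by continuity). Then for every p ≥ p_q there exists a unique global solution v : [0, ∞) → [p_q, ∞) of the generalized Riccati ODE v′(t) = q − φ(v(t)) with v(0) = p; in particular the solution never exits [L, ∞). -/
open Real Set Filter Topology


/-- Core global existence on a half line: if `g` is continuous, positive on `[p, ∞)` and grows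
at most linearly there, then the autonomous ODE `v' = g(v)`, `v 0 = p` has a global solution
(for positive times) staying in `[p, ∞)`. -/
lemma riccati_core (g : ℝ → ℝ) (hg : Continuous g) (p A B : ℝ)
    (hA : 0 < A) (hB : 0 ≤ B)
    (hpos : ∀ y, p ≤ y → 0 < g y)
    (hbound : ∀ y, p ≤ y → g y ≤ A + B * (y - p)) :
    ∃ v : ℝ → ℝ, v 0 = p ∧ ∀ t, 0 ≤ t → p ≤ v t ∧ HasDerivAt v (g (v t)) t := by
  set G : ℝ → ℝ := fun y => g (max y p) with hGdef
  have hGc : Continuous G := hg.comp (continuous_id.max continuous_const)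
  have hGpos : ∀ y, 0 < G y := fun y => hpos _ (le_max_right _ _)
  have hGeq : ∀ y, p ≤ y → G y = g y := fun y hy => by
    simp only [hGdef, max_eq_left hy]
  have hIc : Continuous fun y => (G y)⁻¹ := hGc.inv₀ fun y => (hGpos y).ne'
  set T : ℝ → ℝ := fun x => ∫ s in p..x, (G s)⁻¹ with hTdef
  have hT' : ∀ x, HasDerivAt T (G x)⁻¹ x := fun x =>
    (hIc.integral_hasStrictDerivAt p x).hasDerivAt
  have hTc : Continuous T := by
    rw [continuous_iff_continuousAt]; exact fun x => (hT' x).continuousAt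
  have hTmono : StrictMono T := by
    apply strictMono_of_deriv_pos
    intro x
    rw [(hT' x).deriv]
    exact inv_pos.2 (hGpos x)
  have hTp : T p = 0 := intervalIntegral.integral_same
  -- T tends to -∞ at -∞
  have hbot : Tendsto T atBot atBot := by
    have heq : ∀ x, x ≤ p → T x = (x - p) * (G p)⁻¹ := by
      intro x hx
      have : T x = ∫ s in p..x, (G p)⁻¹ := by
        apply intervalIntegral.integral_congr
        intro s hs
        rw [uIcc_of_ge hx] at hs
        have : max s p = p := max_eq_right hs.2
        simp [hGdef, this]
      rw [this, intervalIntegral.integral_const, smul_eq_mul]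
    have hlin : Tendsto (fun x : ℝ => (x - p) * (G p)⁻¹) atBot atBot := by
      apply Tendsto.atBot_mul_const (inv_pos.2 (hGpos p))
      exact tendsto_atBot_add_const_right _ (-p) tendsto_id
    refine Tendsto.congr' ?_ hlin
    filter_upwards [eventually_le_atBot p] with x hx
    exact (heq x hx).symm
  -- T tends to +∞ at +∞, via comparison with a logarithmic lower bound
  have htop : Tendsto T atTop atTop := by
    set B' : ℝ := B + 1 with hB'def
    have hB' : 0 < B' := by linarith
    set F : ℝ → ℝ := fun x => (Real.log (A + B' * (x - p)) - Real.log A) / B' with hFdef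
    have hAux : ∀ x, p ≤ x → 0 < A + B' * (x - p) := by
      intro x hx
      have : 0 ≤ B' * (x - p) := mul_nonneg hB'.le (by linarith)
      linarith
    have hF' : ∀ x, p ≤ x → HasDerivAt F ((A + B' * (x - p))⁻¹) x := by
      intro x hx
      have h1 : HasDerivAt (fun y : ℝ => A + B' * (y - p)) B' x := by
        have := (((hasDerivAt_id x).sub_const p).const_mul B').const_add A
        simpa using this
      have h2 := (h1.log (hAux x hx).ne').sub_const (Real.log A)
      have h3 := h2.div_const B'
      have heq : B' / (A + B' * (x - p)) / B' = (A + B' * (x - p))⁻¹ := by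
        rw [div_div, mul_comm, ← div_div, div_self hB'.ne', one_div]
      rw [heq] at h3
      exact h3
    have hFle : ∀ x, p ≤ x → F x ≤ T x := by
      intro x hx
      have hmono : MonotoneOn (fun y => T y - F y) (Ici p) := by
        apply monotoneOn_of_deriv_nonneg (convex_Ici p)
        · intro y hy
          exact ((hT' y).sub (hF' y hy)).continuousAt.continuousWithinAt
        · intro y hy
          rw [interior_Ici] at hy
          exact ((hT' y).sub (hF' y (le_of_lt hy))).differentiableAt.differentiableWithinAt
        · intro y hy
          rw [interior_Ici] at hy
          have hy' : p < y := hy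
          rw [show (fun y => T y - F y) = T - F from rfl, ((hT' y).sub (hF' y hy'.le)).deriv]
          have hGy : G y ≤ A + B' * (y - p) := by
            rw [hGeq y hy'.le]
            refine (hbound y hy'.le).trans ?_
            have : B * (y - p) ≤ B' * (y - p) := by
              apply mul_le_mul_of_nonneg_right (by linarith) (by linarith)
            linarith
          have := inv_anti₀ (hGpos y) hGy
          linarith
      have hFp : F p = 0 := by simp [hFdef]
      have h : T p - F p ≤ T x - F x := hmono (self_mem_Ici) hx hx
      rw [hTp, hFp] at h
      linarith
    have hFtop : Tendsto F atTop atTop := by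
      apply Tendsto.atTop_div_const hB'
      apply tendsto_atTop_add_const_right
      apply Real.tendsto_log_atTop.comp
      apply tendsto_atTop_add_const_left
      exact Tendsto.const_mul_atTop hB' (tendsto_atTop_add_const_right _ (-p) tendsto_id)
    apply tendsto_atTop_mono' atTop _ hFtop
    filter_upwards [eventually_ge_atTop p] with x hx
    exact hFle x hx
  have hsurj : Function.Surjective T := hTc.surjective htop hbot
  set e : ℝ ≃o ℝ := StrictMono.orderIsoOfSurjective T hTmono hsurj with hedef
  have heT : ∀ x, e x = T x := fun x => rfl
  set v : ℝ → ℝ := fun t => e.symm t with hvdef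
  have hTv : ∀ t, T (v t) = t := fun t => e.apply_symm_apply t
  have hv0 : v 0 = p := by
    apply hTmono.injective
    rw [hTv 0, hTp]
  have hvderiv : ∀ t, HasDerivAt v (G (v t)) t := by
    intro t
    have h := HasDerivAt.of_local_left_inverse (e.symm.continuous.continuousAt)
      (hT' (v t)) (ne_of_gt (inv_pos.2 (hGpos (v t))))
      (Filter.Eventually.of_forall fun y => hTv y)
    rw [inv_inv] at h
    exact h
  refine ⟨v, hv0, fun t ht => ?_⟩
  have hpv : p ≤ v t := by
    rw [← hv0]
    exact e.symm.monotone ht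
  refine ⟨hpv, ?_⟩
  rw [← hGeq _ hpv]
  exact hvderiv t

/-- Existence for a field positive on a bounded interval `[x0, b)` with a linear bound near the
zero `b`: solutions increase from `x0` and stay below `b`. -/
lemma riccati_core2 (G : ℝ → ℝ) (hG : Continuous G) (x0 b K : ℝ) (hxb : x0 < b)
    (hpos : ∀ y, x0 ≤ y → y < b → 0 < G y)
    (hbound : ∀ y, x0 ≤ y → y < b → G y ≤ K * (b - y)) :
    ∃ w : ℝ → ℝ, w 0 = x0 ∧ ∀ t, 0 ≤ t → x0 ≤ w t ∧ w t < b ∧ HasDerivAt w (G (w t)) t := by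
  have hK : 0 < K := by
    have h1 := hpos x0 le_rfl hxb
    have h2 := hbound x0 le_rfl hxb
    nlinarith
  set u0 : ℝ := -Real.log (b - x0) with hu0def
  have hexpu0 : Real.exp (-u0) = b - x0 := by
    rw [hu0def, neg_neg, Real.exp_log (by linarith)]
  set g : ℝ → ℝ := fun u => Real.exp u * G (b - Real.exp (-u)) with hgdef
  have hgc : Continuous g := by
    apply Real.continuous_exp.mul
    exact hG.comp (continuous_const.sub (Real.continuous_exp.comp continuous_neg))
  have hmem : ∀ u, u0 ≤ u → x0 ≤ b - Real.exp (-u) ∧ b - Real.exp (-u) < b := by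
    intro u hu
    constructor
    · have : Real.exp (-u) ≤ Real.exp (-u0) := Real.exp_le_exp.2 (by linarith)
      rw [hexpu0] at this
      linarith
    · have := Real.exp_pos (-u)
      linarith
  have hgpos : ∀ u, u0 ≤ u → 0 < g u := by
    intro u hu
    exact mul_pos (Real.exp_pos u) (hpos _ (hmem u hu).1 (hmem u hu).2)
  have hgbound : ∀ u, u0 ≤ u → g u ≤ K + 0 * (u - u0) := by
    intro u hu
    have h1 := hbound _ (hmem u hu).1 (hmem u hu).2
    have h2 : g u ≤ Real.exp u * (K * (b - (b - Real.exp (-u)))) := by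
      apply mul_le_mul_of_nonneg_left h1 (Real.exp_pos u).le
    have h3 : Real.exp u * (K * Real.exp (-u)) = K := by
      rw [mul_comm K, ← mul_assoc, ← Real.exp_add, add_neg_cancel, Real.exp_zero, one_mul]
    calc g u ≤ Real.exp u * (K * (b - (b - Real.exp (-u)))) := h2
      _ = K := by rw [show b - (b - Real.exp (-u)) = Real.exp (-u) by ring, h3]
      _ ≤ K + 0 * (u - u0) := by simp
  obtain ⟨v, hv0, hv⟩ := riccati_core g hgc u0 K 0 hK le_rfl hgpos hgbound
  refine ⟨fun t => b - Real.exp (-(v t)), ?_, fun t ht => ?_⟩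
  · show b - Real.exp (-(v 0)) = x0
    rw [hv0, hexpu0]; ring
  obtain ⟨hvge, hvd⟩ := hv t ht
  refine ⟨(hmem _ hvge).1, (hmem _ hvge).2, ?_⟩
  have hd : HasDerivAt (fun t => b - Real.exp (-(v t)))
      (-(Real.exp (-(v t)) * -(g (v t)))) t := (((hvd.neg).exp)).const_sub b
  convert hd using 1
  show G (b - rexp (-v t)) = -(rexp (-(v t)) * -(rexp (v t) * G (b - rexp (-(v t)))))
  rw [mul_neg, neg_neg, ← mul_assoc, ← Real.exp_add, neg_add_cancel, Real.exp_zero, one_mul]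

/-- Global existence and uniqueness for the generalized Riccati ODE started at or above p_q. -/
theorem stmt_6 (L : ℝ) (hL : L ≤ 0) (φ : ℝ → ℝ)
    (hconv : ConvexOn ℝ (Set.Ici L) φ)
    (hC1 : ContDiffOn ℝ 1 φ (Set.Ici L))
    (hφ0 : φ 0 = 0) (q : ℝ) (hq : 0 ≤ q)
    (pq : ℝ) (hpq : pq = sInf {y : ℝ | y ∈ Set.Ici L ∧ φ y ≤ q}) :
    ∀ p : ℝ, pq ≤ p →
      ∃ v : ℝ → ℝ,
        ((∀ t : ℝ, 0 ≤ t → pq ≤ v t) ∧ v 0 = p ∧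
          (∀ t : ℝ, 0 ≤ t → HasDerivWithinAt v (q - φ (v t)) (Set.Ici 0) t)) ∧
        (∀ w : ℝ → ℝ,
          ((∀ t : ℝ, 0 ≤ t → pq ≤ w t) ∧ w 0 = p ∧
            (∀ t : ℝ, 0 ≤ t → HasDerivWithinAt w (q - φ (w t)) (Set.Ici 0) t)) →
          ∀ t : ℝ, 0 ≤ t → w t = v t) := by
  have hdiff : DifferentiableOn ℝ φ (Set.Ici L) := hC1.differentiableOn one_ne_zero
  set ψ : ℝ → ℝ := fun y => φ (max y L) with hψdef
  have hψc : Continuous ψ := by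
    apply hC1.continuousOn.comp_continuous (continuous_id.max continuous_const)
    exact fun y => le_max_right y L
  have hψeq : ∀ y, L ≤ y → ψ y = φ y := fun y hy => by
    simp only [hψdef, max_eq_left hy]
  -- basic facts about pq
  have hpqS : pq ∈ {y : ℝ | y ∈ Set.Ici L ∧ φ y ≤ q} := by
    rw [hpq]
    have hset : {y : ℝ | y ∈ Set.Ici L ∧ φ y ≤ q} = Set.Ici L ∩ ψ ⁻¹' (Set.Iic q) := by
      ext y
      simp only [mem_setOf_eq, mem_inter_iff, mem_Ici, mem_preimage, mem_Iic]
      constructor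
      · rintro ⟨h1, h2⟩; exact ⟨h1, by rw [hψeq y h1]; exact h2⟩
      · rintro ⟨h1, h2⟩; rw [hψeq y h1] at h2; exact ⟨h1, h2⟩
    have hcl : IsClosed {y : ℝ | y ∈ Set.Ici L ∧ φ y ≤ q} := by
      rw [hset]; exact isClosed_Ici.inter (isClosed_Iic.preimage hψc)
    exact hcl.csInf_mem ⟨0, hL, by rw [hφ0]; exact hq⟩ ⟨L, fun y hy => hy.1⟩
  have hLpq : L ≤ pq := hpqS.1
  have hφpq : φ pq ≤ q := hpqS.2
  intro p hp
  have hLp : L ≤ p := hLpq.trans hp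
  -- Existence
  obtain ⟨v, hvsol⟩ : ∃ v : ℝ → ℝ, (∀ t : ℝ, 0 ≤ t → pq ≤ v t) ∧ v 0 = p ∧
      (∀ t : ℝ, 0 ≤ t → HasDerivWithinAt v (q - φ (v t)) (Set.Ici 0) t) := by
    rcases lt_trichotomy (φ p) q with hc | hc | hc
    · -- φ p < q
      by_cases h2 : ∀ y, p ≤ y → φ y < q
      · -- field positive on all of [p, ∞)
        set d := derivWithin φ (Set.Ici L) p with hd
        have hsup : ∀ y, p ≤ y → φ p + d * (y - p) ≤ φ y := by
          intro y hy
          rcases eq_or_lt_of_le hy with rfl | hy'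
          · simp
          · have hs := hconv.le_slope_of_hasDerivWithinAt hLp (hLp.trans hy) hy'
              ((hdiff p hLp).hasDerivWithinAt)
            rw [slope_def_field] at hs
            have := (le_div_iff₀ (show (0:ℝ) < y - p by linarith)).1 hs
            linarith
        have hpos2 : ∀ y, p ≤ y → 0 < q - ψ y := by
          intro y hy
          rw [hψeq y (hLp.trans hy)]
          have := h2 y hy; linarith
        have hbnd : ∀ y, p ≤ y → q - ψ y ≤ (q - φ p) + max (-d) 0 * (y - p) := by
          intro y hy
          rw [hψeq y (hLp.trans hy)]
          have h3 := hsup y hy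
          have h4 : -d * (y - p) ≤ max (-d) 0 * (y - p) :=
            mul_le_mul_of_nonneg_right (le_max_left _ _) (by linarith)
          nlinarith
        obtain ⟨v, hv0, hv⟩ := riccati_core (fun y => q - ψ y) (continuous_const.sub hψc) p
          (q - φ p) (max (-d) 0) (by linarith) (le_max_right _ _) hpos2 hbnd
        refine ⟨v, fun t ht => hp.trans (hv t ht).1, hv0, fun t ht => ?_⟩
        have h5 := (hv t ht).2
        rw [hψeq _ (hLp.trans (hv t ht).1)] at h5
        exact h5.hasDerivWithinAt
      · -- field has a zero above p
        push_neg at h2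
        obtain ⟨y₀, hy₀p, hy₀⟩ := h2
        set Z := {y : ℝ | p ≤ y ∧ q ≤ ψ y} with hZ
        have hZcl : IsClosed Z := by
          have : Z = Set.Ici p ∩ ψ ⁻¹' (Set.Ici q) := rfl
          rw [this]; exact isClosed_Ici.inter (isClosed_Ici.preimage hψc)
        have hZne : Z.Nonempty := ⟨y₀, hy₀p, by rw [hψeq _ (hLp.trans hy₀p)]; exact hy₀⟩
        have hZbdd : BddBelow Z := ⟨p, fun y hy => hy.1⟩
        set b := sInf Z with hb
        have hbZ : b ∈ Z := hZcl.csInf_mem hZne hZbdd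
        have hpb : p < b := by
          rcases eq_or_lt_of_le hbZ.1 with h | h
          · exfalso; have h6 := hbZ.2; rw [← h, hψeq _ hLp] at h6; linarith
          · exact h
        have hLb : L ≤ b := hLp.trans hbZ.1
        have hlt : ∀ y, p ≤ y → y < b → ψ y < q := by
          intro y h1 h2
          by_contra hcon
          push_neg at hcon
          have : b ≤ y := csInf_le hZbdd ⟨h1, hcon⟩
          linarith
        have hψble : ψ b ≤ q := by
          refine le_of_tendsto (x := nhdsWithin b (Set.Iio b))
            ((hψc.tendsto b).mono_left nhdsWithin_le_nhds) ?_
          filter_upwards [Ioo_mem_nhdsLT_of_mem (show b ∈ Ioc p b from ⟨hpb, le_rfl⟩)] with y hy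
          exact (hlt y hy.1.le hy.2).le
        have hφb : φ b = q := by
          rw [← hψeq _ hLb]; exact le_antisymm hψble hbZ.2
        set K := derivWithin φ (Set.Ici L) b with hK
        have hbnd : ∀ y, p ≤ y → y < b → q - ψ y ≤ K * (b - y) := by
          intro y h1 h2
          rw [hψeq _ (hLp.trans h1)]
          have hs := hconv.slope_le_of_hasDerivWithinAt (hLp.trans h1) hLb h2
            ((hdiff b hLb).hasDerivWithinAt)
          rw [slope_def_field] at hs
          have := (div_le_iff₀ (show (0:ℝ) < b - y by linarith)).1 hs
          rw [hφb] at this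
          linarith
        have hpos2 : ∀ y, p ≤ y → y < b → 0 < q - ψ y := by
          intro y h1 h2; linarith [hlt y h1 h2]
        obtain ⟨w, hw0, hw⟩ := riccati_core2 (fun y => q - ψ y) (continuous_const.sub hψc)
          p b K hpb hpos2 hbnd
        refine ⟨w, fun t ht => hp.trans (hw t ht).1, hw0, fun t ht => ?_⟩
        have h5 := (hw t ht).2.2
        rw [hψeq _ (hLp.trans (hw t ht).1)] at h5
        exact h5.hasDerivWithinAt
    · -- constant solution
      exact ⟨fun _ => p, fun t ht => hp, rfl,
        fun t ht => by simpa [hc] using (hasDerivWithinAt_const t (Set.Ici (0:ℝ)) p)⟩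
    · -- φ p > q : solution decreases; reflect
      set Z := {y : ℝ | -p ≤ y ∧ ψ (-y) ≤ q} with hZ
      have hZcl : IsClosed Z := by
        have : Z = Set.Ici (-p) ∩ (fun y => ψ (-y)) ⁻¹' (Set.Iic q) := rfl
        rw [this]
        exact isClosed_Ici.inter (isClosed_Iic.preimage (hψc.comp continuous_neg))
      have hZne : Z.Nonempty := ⟨-pq, neg_le_neg hp, by rw [neg_neg, hψeq _ hLpq]; exact hφpq⟩
      have hZbdd : BddBelow Z := ⟨-p, fun y hy => hy.1⟩
      set b := sInf Z with hb
      have hbZ : b ∈ Z := hZcl.csInf_mem hZne hZbdd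
      have hble : b ≤ -pq := csInf_le hZbdd ⟨neg_le_neg hp, by rw [neg_neg, hψeq _ hLpq]; exact hφpq⟩
      have hLnb : L ≤ -b := by linarith
      have hpb : -p < b := by
        rcases eq_or_lt_of_le hbZ.1 with h | h
        · exfalso; have h6 := hbZ.2; rw [← h, neg_neg, hψeq _ hLp] at h6; linarith
        · exact h
      have hnbp : -b < p := by linarith
      have hgt : ∀ y, -p ≤ y → y < b → q < ψ (-y) := by
        intro y h1 h2
        by_contra hcon
        push_neg at hcon
        have : b ≤ y := csInf_le hZbdd ⟨h1, hcon⟩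
        linarith
      have hψnb : q ≤ ψ (-b) := by
        refine ge_of_tendsto (x := nhdsWithin b (Set.Iio b))
          (((hψc.comp continuous_neg).tendsto b).mono_left nhdsWithin_le_nhds) ?_
        filter_upwards [Ioo_mem_nhdsLT_of_mem (show b ∈ Ioc (-p) b from ⟨hpb, le_rfl⟩)] with y hy
        exact (hgt y hy.1.le hy.2).le
      have hφnb : φ (-b) = q := by
        rw [← hψeq _ hLnb]
        refine le_antisymm ?_ hψnb
        exact hbZ.2
      set K := derivWithin φ (Set.Ici L) p with hK
      have hbnd : ∀ y, -p ≤ y → y < b → ψ (-y) - q ≤ K * (b - y) := by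
        intro y h1 h2
        have hnby : -b < -y := by linarith
        have hyp : -y ≤ p := by linarith
        have hLy : L ≤ -y := by linarith
        rw [hψeq _ hLy]
        have hs2 : slope φ (-b) p ≤ K :=
          hconv.slope_le_of_hasDerivWithinAt hLnb hLp hnbp ((hdiff p hLp).hasDerivWithinAt)
        rw [slope_def_field] at hs2
        have hsec : (φ (-y) - φ (-b)) / (-y - -b) ≤ (φ p - φ (-b)) / (p - -b) :=
          hconv.secant_mono hLnb hLy hLp (by linarith) (by linarith) hyp
        have h7 : (φ (-y) - φ (-b)) / (-y - -b) ≤ K := hsec.trans hs2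
        have h8 := (div_le_iff₀ (show (0:ℝ) < -y - -b by linarith)).1 h7
        rw [hφnb] at h8
        nlinarith
      have hpos2 : ∀ y, -p ≤ y → y < b → 0 < ψ (-y) - q := by
        intro y h1 h2; linarith [hgt y h1 h2]
      obtain ⟨w, hw0, hw⟩ := riccati_core2 (fun y => ψ (-y) - q)
        ((hψc.comp continuous_neg).sub continuous_const) (-p) b K hpb hpos2 hbnd
      refine ⟨fun t => -(w t), fun t ht => ?_, by show -(w 0) = p; rw [hw0, neg_neg], fun t ht => ?_⟩
      · show pq ≤ -(w t)
        have := (hw t ht).2.1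
        linarith
      · have h5 := (hw t ht).2.2.neg
        have hwb := (hw t ht).2.1
        have hLwt : L ≤ -(w t) := by linarith
        rw [hψeq _ hLwt] at h5
        have h6 : -(φ (-(w t)) - q) = q - φ (-(w t)) := by ring
        rw [h6] at h5
        exact h5.hasDerivWithinAt
  refine ⟨v, hvsol, ?_⟩
  rintro w ⟨hw1, hw2, hw3⟩ t ht
  obtain ⟨hv1, hv2, hv3⟩ := hvsol
  have hcont : ∀ f : ℝ → ℝ, (∀ s : ℝ, 0 ≤ s → HasDerivWithinAt f (q - φ (f s)) (Set.Ici 0) s) →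
      ContinuousOn f (Icc 0 t) := by
    intro f hf s hs
    exact ((hf s hs.1).continuousWithinAt).mono (fun x hx => hx.1)
  have hwc := hcont w hw3
  have hvc := hcont v hv3
  obtain ⟨Mw, hMw⟩ := (isCompact_Icc (a := (0:ℝ)) (b := t)).exists_bound_of_continuousOn hwc
  obtain ⟨Mv, hMv⟩ := (isCompact_Icc (a := (0:ℝ)) (b := t)).exists_bound_of_continuousOn hvc
  set M := max Mw Mv with hM
  set s : Set ℝ := Icc pq M with hs
  have hws : ∀ u ∈ Icc (0:ℝ) t, w u ∈ s := by
    intro u hu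
    refine ⟨hw1 u hu.1, ?_⟩
    have h9 := hMw u hu
    rw [Real.norm_eq_abs] at h9
    exact le_trans (le_abs_self _) (h9.trans (le_max_left _ _))
  have hvs : ∀ u ∈ Icc (0:ℝ) t, v u ∈ s := by
    intro u hu
    refine ⟨hv1 u hu.1, ?_⟩
    have h9 := hMv u hu
    rw [Real.norm_eq_abs] at h9
    exact le_trans (le_abs_self _) (h9.trans (le_max_right _ _))
  have hsub : s ⊆ Set.Ici L := fun x hx => hLpq.trans hx.1
  have hDcont : ContinuousOn (derivWithin φ (Set.Ici L)) (Set.Ici L) :=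
    hC1.continuousOn_derivWithin (uniqueDiffOn_Ici L) le_rfl
  obtain ⟨C, hC⟩ := (isCompact_Icc (a := pq) (b := M)).exists_bound_of_continuousOn
    (hDcont.mono hsub)
  have hlip : LipschitzOnWith ‖C‖₊ (fun y => q - φ y) s := by
    apply Convex.lipschitzOnWith_of_nnnorm_hasDerivWithin_le
      (f' := fun x => -(derivWithin φ (Set.Ici L) x)) (convex_Icc pq M)
    · intro x hx
      exact (((hdiff x (hsub hx)).hasDerivWithinAt).mono hsub).const_sub q
    · intro x hx
      rw [← NNReal.coe_le_coe, coe_nnnorm, coe_nnnorm, norm_neg]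
      exact (hC x hx).trans (by rw [Real.norm_eq_abs]; exact le_abs_self C)
  have key := ODE_solution_unique_of_mem_Icc_right (v := fun _ y => q - φ y)
    (s := fun _ => s) (fun _ _ => hlip) hwc
    (fun u hu => (hw3 u hu.1).mono (Ici_subset_Ici.2 hu.1))
    (fun u hu => hws u ⟨hu.1, hu.2.le⟩) hvc
    (fun u hu => (hv3 u hu.1).mono (Ici_subset_Ici.2 hu.1))
    (fun u hu => hvs u ⟨hu.1, hu.2.le⟩)
    (by rw [hw2, hv2])
  exact key ⟨ht, le_rfl⟩
end

section
/- Let L ∈ ℝ with L ≤ 0 and let φ : [L, ∞) → ℝ be convex, continuously differentiable and satisfy φ(0) = 0. Fix q ≥ 0 and set p_q := inf{ y ∈ [L, ∞) : φ(y) ≤ q }, and suppose p_q > L. Let p ∈ [L, p_q). Then φ(y) > q for all y ∈ [L, p_q), the quantity T* := ∫_L^p dy/(φ(y) − q) is finite and strictly positive (with T* = 0 when p = L understood as the empty integral), and: (a) there exists a strictly decreasing solution v : [0, T*] → [L, p] of v′(t) = q − φ(v(t)), v(0) = p, with v(T*) = L; (b) for every T > T* there is no differentiable function v : [0, T] → [L,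 ∞) with v(0) = p satisfying v′(t) = q − φ(v(t)) for all t ∈ [0, T]. Consequently, sup{ T ≥ 0 : a solution with values in [L, ∞) exists on [0, T] } = ∫_L^p dy/(φ(y) − q). -/
open Real Set MeasureTheory

/-- Explosion-time formula for the generalized Riccati ODE started below p_q. -/
theorem stmt_7 (L : ℝ) (hL : L ≤ 0) (φ : ℝ → ℝ)
    (hconv : ConvexOn ℝ (Set.Ici L) φ)
    (hC1 : ContDiffOn ℝ 1 φ (Set.Ici L))
    (hφ0 : φ 0 = 0) (q : ℝ) (hq : 0 ≤ q)
    (pq : ℝ) (hpq : pq = sInf {y : ℝ | y ∈ Set.Ici L ∧ φ y ≤ q})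
    (hpqL : L < pq) (p : ℝ) (hp : p ∈ Set.Ico L pq)
    (Tstar : ℝ) (hT : Tstar = ∫ y in L..p, 1 / (φ y - q)) :
    (∀ y ∈ Set.Ico L pq, q < φ y) ∧
    IntervalIntegrable (fun y => 1 / (φ y - q)) MeasureTheory.volume L p ∧
    (L < p → 0 < Tstar) ∧
    (∃ v : ℝ → ℝ,
      StrictAntiOn v (Set.Icc 0 Tstar) ∧
      (∀ t ∈ Set.Icc (0:ℝ) Tstar, v t ∈ Set.Icc L p) ∧
      v 0 = p ∧ v Tstar = L ∧
      (∀ t ∈ Set.Icc (0:ℝ) Tstar, HasDerivWithinAt v (q - φ (v t)) (Set.Icc 0 Tstar) t)) ∧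
    (∀ T : ℝ, Tstar < T →
      ¬ ∃ v : ℝ → ℝ,
          (∀ t ∈ Set.Icc (0:ℝ) T, L ≤ v t) ∧ v 0 = p ∧
          (∀ t ∈ Set.Icc (0:ℝ) T, HasDerivWithinAt v (q - φ (v t)) (Set.Icc 0 T) t)) ∧
    sSup {T : ℝ | 0 ≤ T ∧ ∃ v : ℝ → ℝ,
        (∀ t ∈ Set.Icc (0:ℝ) T, L ≤ v t) ∧ v 0 = p ∧
        (∀ t ∈ Set.Icc (0:ℝ) T, HasDerivWithinAt v (q - φ (v t)) (Set.Icc 0 T) t)} = Tstar := by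
  obtain ⟨hLp, hppq⟩ := hp
  -- (1) φ > q on [L, pq)
  have key1 : ∀ y ∈ Set.Ico L pq, q < φ y := by
    intro y hy
    by_contra hcon
    push_neg at hcon
    have h1 : pq ≤ y := by
      rw [hpq]
      exact csInf_le ⟨L, fun z hz => hz.1⟩ ⟨hy.1, hcon⟩
    exact absurd h1 (not_le.2 hy.2)
  have hsub : Set.Icc L p ⊆ Set.Ico L pq := fun y hy => ⟨hy.1, lt_of_le_of_lt hy.2 hppq⟩
  -- clamp function
  set c : ℝ → ℝ := fun y => max L (min y p) with hc
  have hc_mem : ∀ y, c y ∈ Set.Icc L p := fun y =>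
    ⟨le_max_left _ _, max_le hLp (min_le_right _ _)⟩
  have hc_id : ∀ y ∈ Set.Icc L p, c y = y := by
    intro y hy
    simp only [hc]
    rw [min_eq_left hy.2, max_eq_right hy.1]
  have hc_cont : Continuous c := continuous_const.max (continuous_id.min continuous_const)
  have hgpos0 : ∀ y, 0 < φ (c y) - q := fun y => sub_pos.2 (key1 _ (hsub (hc_mem y)))
  have hφc : Continuous fun y => φ (c y) :=
    hC1.continuousOn.comp_continuous hc_cont (fun y => (hc_mem y).1)
  set g : ℝ → ℝ := fun y => 1 / (φ (c y) - q) with hg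
  have hgcont : Continuous g :=
    continuous_const.div (hφc.sub continuous_const) (fun y => (hgpos0 y).ne')
  have hgpos : ∀ y, 0 < g y := fun y => one_div_pos.2 (hgpos0 y)
  set F : ℝ → ℝ := fun x => ∫ y in L..x, g y with hF
  have hFderiv : ∀ x, HasDerivAt F (g x) x := fun x =>
    intervalIntegral.integral_hasDerivAt_right (hgcont.intervalIntegrable _ _)
      (hgcont.stronglyMeasurableAtFilter _ _) hgcont.continuousAt
  have hFmono : StrictMono F := strictMono_of_deriv_pos fun x => by
    rw [(hFderiv x).deriv]; exact hgpos x
  have hFcont : Continuous F := continuous_iff_continuousAt.2 fun x => (hFderiv x).continuousAt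
  have hFL : F L = 0 := intervalIntegral.integral_same
  have hTF : Tstar = F p := by
    rw [hT]
    apply intervalIntegral.integral_congr
    intro y hy
    rw [Set.uIcc_of_le hLp] at hy
    simp only [hg, hc_id y hy]
  -- integrability
  have hInt : IntervalIntegrable (fun y => 1 / (φ y - q)) volume L p := by
    apply ContinuousOn.intervalIntegrable
    rw [Set.uIcc_of_le hLp]
    apply ContinuousOn.div continuousOn_const
      ((hC1.continuousOn.mono (fun y hy => hy.1)).sub continuousOn_const)
    intro y hy
    exact (sub_pos.2 (key1 y (hsub hy))).ne'
  -- positivity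
  have hpos : L < p → 0 < Tstar := by
    intro hLltp
    rw [hT]
    apply intervalIntegral.intervalIntegral_pos_of_pos_on hInt _ hLltp
    intro x hx
    exact one_div_pos.2 (sub_pos.2 (key1 x (hsub ⟨hx.1.le, hx.2.le⟩)))
  have hTnonneg : 0 ≤ Tstar := by
    rw [hTF, ← hFL]; exact hFmono.monotone hLp
  -- surjectivity of F
  have hgp : ∀ y, p ≤ y → g y = g p := by
    intro y hy
    have hcy : c y = p := by
      simp only [hc]; rw [min_eq_right hy, max_eq_right hLp]
    have hcp : c p = p := hc_id p ⟨hLp, le_rfl⟩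
    simp only [hg, hcy, hcp]
  have hgL : ∀ y, y ≤ L → g y = g L := by
    intro y hy
    have hcy : c y = L := by
      simp only [hc]; rw [min_eq_left (le_trans hy hLp), max_eq_left hy]
    have hcL : c L = L := hc_id L ⟨le_rfl, hLp⟩
    simp only [hg, hcy, hcL]
  have heqtop : ∀ x, p ≤ x → F x = F p + (x - p) * g p := by
    intro x hx
    have h2 : (∫ y in p..x, g y) = (x - p) * g p := by
      rw [intervalIntegral.integral_congr (g := fun _ => g p) ?_,
        intervalIntegral.integral_const, smul_eq_mul]
      intro y hy
      rw [Set.uIcc_of_le hx] at hy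
      exact hgp y hy.1
    have h3 := intervalIntegral.integral_add_adjacent_intervals
      (hgcont.intervalIntegrable (μ := volume) L p) (hgcont.intervalIntegrable (μ := volume) p x)
    show (∫ y in L..x, g y) = (∫ y in L..p, g y) + (x - p) * g p
    rw [← h3, h2]
  have heqbot : ∀ x, x ≤ L → F x = (x - L) * g L := by
    intro x hx
    have h2 : (∫ y in x..L, g y) = (L - x) * g L := by
      rw [intervalIntegral.integral_congr (g := fun _ => g L) ?_,
        intervalIntegral.integral_const, smul_eq_mul]
      intro y hy
      rw [Set.uIcc_of_le hx] at hy
      exact hgL y hy.2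
    have h3 := intervalIntegral.integral_add_adjacent_intervals
      (hgcont.intervalIntegrable (μ := volume) L x) (hgcont.intervalIntegrable (μ := volume) x L)
    rw [intervalIntegral.integral_same] at h3
    show (∫ y in L..x, g y) = (x - L) * g L
    have : (∫ y in L..x, g y) = -(∫ y in x..L, g y) := by linarith
    rw [this, h2]; ring
  have hFtop : Filter.Tendsto F Filter.atTop Filter.atTop := by
    have haff : Filter.Tendsto (fun x : ℝ => F p + (x - p) * g p) Filter.atTop Filter.atTop := by
      apply Filter.tendsto_atTop_add_const_left
      apply Filter.Tendsto.atTop_mul_const (hgpos p)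
      exact Filter.tendsto_atTop_add_const_right _ _ Filter.tendsto_id
    apply haff.congr'
    filter_upwards [Filter.eventually_ge_atTop p] with x hx
    exact (heqtop x hx).symm
  have hFbot : Filter.Tendsto F Filter.atBot Filter.atBot := by
    have haff : Filter.Tendsto (fun x : ℝ => (x - L) * g L) Filter.atBot Filter.atBot := by
      apply Filter.Tendsto.atBot_mul_const (hgpos L)
      exact Filter.tendsto_atBot_add_const_right _ _ Filter.tendsto_id
    apply haff.congr'
    filter_upwards [Filter.eventually_le_atBot L] with x hx
    exact (heqbot x hx).symm
  have hFsurj : Function.Surjective F := hFcont.surjective hFtop hFbot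
  set e : ℝ ≃o ℝ := StrictMono.orderIsoOfSurjective F hFmono hFsurj with he
  have heF : ∀ x, e x = F x := fun x => rfl
  have hFe : ∀ y, F (e.symm y) = y := fun y => by rw [← heF]; exact e.apply_symm_apply y
  have heFx : ∀ x, e.symm (F x) = x := fun x => by rw [← heF]; exact e.symm_apply_apply x
  have hsymm_cont : Continuous (e.symm : ℝ → ℝ) := OrderIso.continuous e.symm
  set v : ℝ → ℝ := fun t => e.symm (Tstar - t) with hv
  have hv0 : v 0 = p := by
    simp only [hv, sub_zero]; rw [hTF]; exact heFx p
  have hvT : v Tstar = L := by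
    simp only [hv, sub_self]; rw [← hFL]; exact heFx L
  have hvmem : ∀ t ∈ Set.Icc (0:ℝ) Tstar, v t ∈ Set.Icc L p := by
    intro t ht
    constructor
    · calc L = e.symm (F L) := (heFx L).symm
      _ ≤ e.symm (Tstar - t) := e.symm.monotone (by rw [hFL]; linarith [ht.2])
    · calc v t = e.symm (Tstar - t) := rfl
      _ ≤ e.symm (F p) := e.symm.monotone (by rw [← hTF]; linarith [ht.1])
      _ = p := heFx p
  have hvanti : StrictAntiOn v (Set.Icc 0 Tstar) := by
    intro s hs t ht hst
    exact e.symm.strictMono (by linarith : Tstar - t < Tstar - s)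
  have hvderiv : ∀ t ∈ Set.Icc (0:ℝ) Tstar, HasDerivWithinAt v (q - φ (v t)) (Set.Icc 0 Tstar) t := by
    intro t ht
    have hx : v t ∈ Set.Icc L p := hvmem t ht
    have hgx : g (v t) = (φ (v t) - q)⁻¹ := by
      simp only [hg, hc_id _ hx, one_div]
    have hsymmd : HasDerivAt (⇑e.symm) (g (v t))⁻¹ (Tstar - t) :=
      HasDerivAt.of_local_left_inverse hsymm_cont.continuousAt (hFderiv _)
        (hgpos _).ne' (Filter.Eventually.of_forall hFe)
    have hinner : HasDerivAt (fun s : ℝ => Tstar - s) (-1) t := by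
      simpa using (hasDerivAt_id t).const_sub Tstar
    have hcomp : HasDerivAt v ((g (v t))⁻¹ * (-1)) t := HasDerivAt.comp t hsymmd hinner
    have heq : (g (v t))⁻¹ * (-1) = q - φ (v t) := by
      rw [hgx, inv_inv]; ring
    exact (heq ▸ hcomp).hasDerivWithinAt
  -- nonexistence for T > Tstar
  have hno : ∀ T : ℝ, Tstar < T →
      ¬ ∃ w : ℝ → ℝ, (∀ t ∈ Set.Icc (0:ℝ) T, L ≤ w t) ∧ w 0 = p ∧
        (∀ t ∈ Set.Icc (0:ℝ) T, HasDerivWithinAt w (q - φ (w t)) (Set.Icc 0 T) t) := by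
    rintro T hTT ⟨w, hwL, hw0, hwd⟩
    have hT0 : (0:ℝ) ≤ T := le_trans hTnonneg hTT.le
    have hwcont : ContinuousOn w (Set.Icc 0 T) := fun t ht => (hwd t ht).continuousWithinAt
    -- invariance : w ≤ p
    have hup : ∀ t ∈ Set.Icc (0:ℝ) T, w t ≤ p := by
      by_contra hcon
      push_neg at hcon
      obtain ⟨t0, ht0, ht0p⟩ := hcon
      set A : Set ℝ := {t | t ∈ Set.Icc (0:ℝ) T ∧ p < w t} with hA
      have hAne : A.Nonempty := ⟨t0, ht0, ht0p⟩
      have hAbdd : BddBelow A := ⟨0, fun z hz => hz.1.1⟩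
      set s := sInf A with hs
      have hs0 : 0 ≤ s := le_csInf hAne fun z hz => hz.1.1
      have hsT' : s ≤ T := le_trans (csInf_le hAbdd ⟨ht0, ht0p⟩) ht0.2
      have hsmem : s ∈ Set.Icc (0:ℝ) T := ⟨hs0, hsT'⟩
      have hlt : ∀ t ∈ Set.Ico (0:ℝ) s, w t ≤ p := by
        intro t ht
        by_contra hh
        push_neg at hh
        have : s ≤ t := csInf_le hAbdd ⟨⟨ht.1, le_trans ht.2.le hsT'⟩, hh⟩
        exact absurd this (not_le.2 ht.2)
      have hsle : w s ≤ p := by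
        rcases eq_or_lt_of_le hs0 with h0 | h0
        · rw [← h0, hw0]
        · have hctn : ContinuousWithinAt w (Set.Icc 0 T) s := hwcont s hsmem
          have hmono : nhdsWithin s (Set.Ico 0 s) ≤ nhdsWithin s (Set.Icc 0 T) :=
            nhdsWithin_mono s (fun t ht => ⟨ht.1, le_trans ht.2.le hsT'⟩)
          have h1 : Filter.Tendsto w (nhdsWithin s (Set.Ico 0 s)) (nhds (w s)) :=
            hctn.tendsto.mono_left hmono
          have hne : (nhdsWithin s (Set.Ico 0 s)).NeBot := by
            apply mem_closure_iff_nhdsWithin_neBot.mp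
            rw [closure_Ico h0.ne]
            exact ⟨hs0, le_rfl⟩
          exact le_of_tendsto h1 (Filter.eventually_of_mem self_mem_nhdsWithin hlt)
      have hwsmem : w s ∈ Set.Icc L p := ⟨hwL s hsmem, hsle⟩
      have hdneg : q - φ (w s) < 0 := sub_neg.2 (key1 _ (hsub hwsmem))
      have hsT : s < T := by
        rcases lt_or_eq_of_le hsT' with h | h
        · exact h
        · exfalso
          obtain ⟨a, ha⟩ := hAne
          have h1 : s ≤ a := csInf_le hAbdd ha
          have h2 : a ≤ T := ha.1.2
          have h3 : a = s := le_antisymm (h ▸ h2) h1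
          exact absurd (h3 ▸ ha.2) (not_lt.2 hsle)
      -- slope argument
      have hslope := (hasDerivWithinAt_iff_tendsto_slope.mp (hwd s hsmem))
      have hle : nhdsWithin s (Set.Ioi s) ≤ nhdsWithin s (Set.Icc 0 T \ {s}) := by
        rw [← nhdsWithin_Ioc_eq_nhdsGT hsT]
        apply nhdsWithin_mono
        intro t ht
        exact ⟨⟨le_trans hs0 ht.1.le, ht.2⟩, ne_of_gt ht.1⟩
      have hslope' : Filter.Tendsto (slope w s) (nhdsWithin s (Set.Ioi s)) (nhds (q - φ (w s))) :=
        hslope.mono_left hle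
      have hev : ∀ᶠ t in nhdsWithin s (Set.Ioi s), slope w s t < 0 :=
        hslope' (Iio_mem_nhds hdneg)
      have hev2 : ∀ᶠ t in nhdsWithin s (Set.Ioi s), w t < w s := by
        filter_upwards [hev, self_mem_nhdsWithin] with t h1 h2
        have hts : 0 < t - s := sub_pos.2 h2
        have h1' : (t - s)⁻¹ * (w t - w s) < 0 := by
          simpa [slope, div_eq_inv_mul] using h1
        nlinarith [inv_pos.2 hts]
      have hfreq : ∃ᶠ t in nhdsWithin s (Set.Ioi s), p < w t := by
        rw [Filter.frequently_iff]
        intro U hU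
        obtain ⟨u, hu, hsubU⟩ := mem_nhdsGT_iff_exists_Ioc_subset.mp hU
        obtain ⟨a, haA, hau⟩ := exists_lt_of_csInf_lt hAne (show sInf A < u from hu)
        have h1 : s ≤ a := csInf_le hAbdd haA
        have h2 : s ≠ a := by
          intro hh
          exact absurd (hh ▸ haA).2 (not_lt.2 hsle)
        exact ⟨a, hsubU ⟨lt_of_le_of_ne h1 h2, hau.le⟩, haA.2⟩
      obtain ⟨t, h1, h2⟩ := (hev2.and_frequently hfreq).exists
      linarith
    have hwmem : ∀ t ∈ Set.Icc (0:ℝ) T, w t ∈ Set.Icc L p := fun t ht => ⟨hwL t ht, hup t ht⟩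
    -- F (w t) + t is constant
    set h : ℝ → ℝ := fun t => F (w t) + t with hh
    have hhd : ∀ t ∈ Set.Ico (0:ℝ) T, HasDerivWithinAt h 0 (Set.Ici t) t := by
      intro t ht
      have ht' : t ∈ Set.Icc (0:ℝ) T := ⟨ht.1, ht.2.le⟩
      have h1 : HasDerivWithinAt (fun u => F (w u)) (g (w t) * (q - φ (w t))) (Set.Icc 0 T) t :=
        (hFderiv (w t)).comp_hasDerivWithinAt t (hwd t ht')
      have h2 : HasDerivWithinAt h (g (w t) * (q - φ (w t)) + 1) (Set.Icc 0 T) t := by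
        exact h1.add (hasDerivWithinAt_id t (Set.Icc 0 T))
      have hmem := hwmem t ht'
      have hposd : (0:ℝ) < φ (w t) - q := sub_pos.2 (key1 _ (hsub hmem))
      have h3 : g (w t) * (q - φ (w t)) + 1 = 0 := by
        simp only [hg, hc_id _ hmem]
        field_simp
        ring
      have h4 : HasDerivWithinAt h 0 (Set.Icc 0 T) t := h3 ▸ h2
      exact h4.mono_of_mem_nhdsWithin (Filter.mem_of_superset
        (Icc_mem_nhdsGE_of_mem ⟨le_refl t, ht.2⟩) (Set.Icc_subset_Icc_left ht.1))
    have hhcont : ContinuousOn h (Set.Icc 0 T) :=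
      (hFcont.comp_continuousOn hwcont).add continuousOn_id
    have hconst := constant_of_has_deriv_right_zero hhcont hhd T ⟨hT0, le_rfl⟩
    have hh0 : h 0 = F p := by simp only [hh, hw0, add_zero]
    have hhT : h T = F (w T) + T := rfl
    have hge : 0 ≤ F (w T) := by
      rw [← hFL]; exact hFmono.monotone (hwL T ⟨hT0, le_rfl⟩)
    rw [hhT, hh0] at hconst
    rw [hTF] at hTT
    linarith
  refine ⟨key1, hInt, hpos, ⟨v, hvanti, hvmem, hv0, hvT, hvderiv⟩, hno, ?_⟩
  apply IsGreatest.csSup_eq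
  constructor
  · exact ⟨hTnonneg, v, fun t ht => (hvmem t ht).1, hv0, hvderiv⟩
  · intro T hT'
    by_contra hcon
    push_neg at hcon
    exact hno T hcon hT'.2
end

section
/- Let L ∈ ℝ with L ≤ 0 and let φ : [L, ∞) → ℝ be convex, continuously differentiable and satisfy φ(0) = 0. Then the following are equivalent: (i) φ(L) ≤ 0; (ii) for every q ≥ 0 and every p ∈ [L, ∞) there exists a global solution v : [0, ∞) → [L, ∞) of the generalized Riccati ODE v′(t) = q − φ(v(t)) with v(0) = p. -/
open Real Set

lemma derivIci_of_Icc {f : ℝ → ℝ} {d T t : ℝ} (ht : t ∈ Set.Ico 0 T)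
    (h : HasDerivWithinAt f d (Set.Icc 0 T) t) : HasDerivWithinAt f d (Set.Ici t) t := by
  refine h.mono_of_mem_nhdsWithin (Filter.mem_of_superset
    (inter_mem_nhdsWithin (Set.Ici t) (Iio_mem_nhds ht.2)) ?_)
  rintro u ⟨hu1, hu2⟩
  exact ⟨le_trans ht.1 hu1, le_of_lt hu2⟩

lemma lipOnIcc {L M : ℝ} (hLM : L ≤ M) {φ : ℝ → ℝ} (hC1 : ContDiffOn ℝ 1 φ (Set.Ici L)) :
    ∃ K : NNReal, LipschitzOnWith K φ (Set.Icc L M) := by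
  have hu : UniqueDiffOn ℝ (Set.Ici L) := uniqueDiffOn_Ici L
  have hd : ContinuousOn (derivWithin φ (Set.Ici L)) (Set.Ici L) :=
    hC1.continuousOn_derivWithin hu le_rfl
  obtain ⟨C, hC⟩ := isCompact_Icc.exists_bound_of_continuousOn (hd.mono Icc_subset_Ici_self)
  refine ⟨⟨max C 0, le_max_right _ _⟩, (convex_Icc L M).lipschitzOnWith_of_nnnorm_hasDerivWithin_le
    (fun x hx => ((hC1.differentiableOn one_ne_zero x (Icc_subset_Ici_self hx)).hasDerivWithinAt).mono
      Icc_subset_Ici_self) (fun x hx => ?_)⟩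
  change ‖derivWithin φ (Set.Ici L) x‖ ≤ max C 0
  exact le_trans (hC x hx) (le_max_left _ _)

lemma gronwallBound_continuous (δ K ε : ℝ) : Continuous (gronwallBound δ K ε) := by
  rcases eq_or_ne K 0 with h | h
  · rw [h, gronwallBound_K0]; fun_prop
  · rw [gronwallBound_of_K_ne_0 h]; fun_prop

lemma affine_lower {L : ℝ} (hL : L ≤ 0) {φ : ℝ → ℝ}
    (hconv : ConvexOn ℝ (Set.Ici L) φ) (hC1 : ContDiffOn ℝ 1 φ (Set.Ici L)) (hφ0 : φ 0 = 0) :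
    ∃ B₁ B₂ : ℝ, 0 ≤ B₁ ∧ 0 ≤ B₂ ∧ ∀ y ∈ Set.Ici L, -B₁ - B₂ * |y| ≤ φ y := by
  obtain ⟨C, hC⟩ := isCompact_Icc.exists_bound_of_continuousOn
    ((hC1.continuousOn).mono (Icc_subset_Ici_self : Set.Icc L (1:ℝ) ⊆ Set.Ici L))
  refine ⟨max C 0, max (-(φ 1)) 0, le_max_right _ _, le_max_right _ _, fun y hy => ?_⟩
  rcases le_or_gt y 1 with h1 | h1
  · have hb := hC y ⟨hy, h1⟩
    rw [Real.norm_eq_abs] at hb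
    have h2 : 0 ≤ max (-(φ 1)) 0 * |y| := mul_nonneg (le_max_right _ _) (abs_nonneg y)
    have h3 := (abs_le.1 hb).1
    have h4 : C ≤ max C 0 := le_max_left _ _
    linarith
  · have hy0 : (0:ℝ) < y := lt_trans one_pos h1
    have ha : (0:ℝ) ≤ 1 - 1/y := by
      have : 1/y ≤ 1 := by rw [div_le_one hy0]; exact h1.le
      linarith
    have hb : (0:ℝ) ≤ 1/y := by positivity
    have hab : (1 - 1/y) + 1/y = (1:ℝ) := by ring
    have key := hconv.2 (Set.mem_Ici.2 hL) (Set.mem_Ici.2 (le_trans hL hy0.le)) ha hb hab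
    have harg : (1 - 1/y) • (0:ℝ) + (1/y) • y = 1 := by
      simp only [smul_eq_mul]; field_simp; ring
    rw [harg, hφ0, smul_eq_mul, smul_eq_mul, mul_zero, zero_add] at key
    have hsimp : y * (1/y * φ y) = φ y := by field_simp
    have hyφ : y * φ 1 ≤ φ y := by
      have := mul_le_mul_of_nonneg_left key hy0.le
      linarith
    have hB2 : -(max (-(φ 1)) 0) ≤ φ 1 := by
      have := le_max_left (-(φ 1)) 0; linarith
    have habs : |y| = y := abs_of_pos hy0
    have hmax : 0 ≤ max C 0 := le_max_right _ _
    have hm : y * (-(max (-(φ 1)) 0)) ≤ y * φ 1 := mul_le_mul_of_nonneg_left hB2 hy0.le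
    rw [habs]
    nlinarith

lemma solOnIcc {L : ℝ} (hL : L ≤ 0) {φ : ℝ → ℝ}
    (hconv : ConvexOn ℝ (Set.Ici L) φ) (hC1 : ContDiffOn ℝ 1 φ (Set.Ici L)) (hφ0 : φ 0 = 0)
    (hφL : φ L ≤ 0) {q : ℝ} (hq : 0 ≤ q) {p : ℝ} (hp : L ≤ p) {T : ℝ} (hT : 0 < T) :
    ∃ v : ℝ → ℝ, v 0 = p ∧ (∀ t ∈ Set.Icc 0 T, L ≤ v t) ∧
      ∀ t ∈ Set.Icc 0 T, HasDerivWithinAt v (q - φ (v t)) (Set.Icc 0 T) t := by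
  obtain ⟨B₁, B₂, hB₁, hB₂, hlow⟩ := affine_lower hL hconv hC1 hφ0
  set ε : ℝ := q + B₁ - 2 * B₂ * L with hε
  obtain ⟨G, hG⟩ := isCompact_Icc.exists_bound_of_continuousOn
    ((gronwallBound_continuous p B₂ ε).continuousOn (s := Set.Icc 0 T))
  set M : ℝ := max (max G 0) p with hM
  have hM0 : 0 ≤ M := le_trans (le_max_right G 0) (le_max_left _ p)
  have hLM : L ≤ M := le_trans hL hM0
  set c : ℝ → ℝ := fun x => min (max x L) M with hc
  have hcmem : ∀ x, c x ∈ Set.Icc L M := fun x => ⟨le_min (le_max_right x L) hLM, min_le_right _ _⟩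
  set F : ℝ → ℝ := fun x => q - φ (c x) with hF
  obtain ⟨K, hK⟩ := lipOnIcc hLM hC1
  have hFlip : LipschitzWith K F := by
    rw [lipschitzWith_iff_dist_le_mul]
    intro x y
    have hcx : dist (c x) (c y) ≤ dist x y := by
      have h1 : LipschitzWith 1 c := (LipschitzWith.id.max_const L).min_const M
      simpa using h1.dist_le_mul x y
    have h2 := (lipschitzOnWith_iff_dist_le_mul.1 hK) _ (hcmem x) _ (hcmem y)
    calc dist (F x) (F y) = dist (φ (c x)) (φ (c y)) := dist_sub_left q _ _
      _ ≤ K * dist (c x) (c y) := h2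
      _ ≤ K * dist x y := by
          exact mul_le_mul_of_nonneg_left hcx K.coe_nonneg
  obtain ⟨Bφ, hBφ⟩ := isCompact_Icc.exists_bound_of_continuousOn
    (hC1.continuousOn.mono (Icc_subset_Ici_self : Set.Icc L M ⊆ Set.Ici L))
  set C₀ : ℝ := |q| + max Bφ 0 with hC₀def
  have hC₀ : ∀ x, ‖F x‖ ≤ C₀ := by
    intro x
    have h1 := le_trans (hBφ (c x) (hcmem x)) (le_max_left Bφ 0)
    rw [Real.norm_eq_abs] at h1 ⊢
    have := abs_le.1 h1
    rw [hC₀def]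
    have h2 := abs_le.1 (le_refl |q|)
    rw [abs_sub_comm]
    rw [abs_le]
    constructor <;> [nlinarith [neg_abs_le q, le_abs_self q]; nlinarith [neg_abs_le q, le_abs_self q]]
  have hC₀0 : 0 ≤ C₀ := le_trans (norm_nonneg _) (hC₀ 0)
  have hpl : IsPicardLindelof (fun _ x => F x) (tmin := 0) (tmax := T) ⟨0, le_refl 0, hT.le⟩ p
      ⟨C₀ * T, by positivity⟩ 0 ⟨C₀, hC₀0⟩ K :=
    IsPicardLindelof.of_time_independent (fun x _ => hC₀ x) hFlip.lipschitzOnWith (by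
      rw [tsub_zero]; simp [max_eq_left hT.le]; exact le_rfl)
  obtain ⟨f, (hf0 : f 0 = p), hfd⟩ := hpl.exists_eq_forall_mem_Icc_hasDerivWithinAt₀
  have hcont : ContinuousOn f (Set.Icc 0 T) := fun t ht => (hfd t ht).continuousWithinAt
  -- claim A : stays above L
  have hA : ∀ t ∈ Set.Icc 0 T, L ≤ f t := by
    by_contra hcon
    push_neg at hcon
    obtain ⟨t₁, ht₁, hft₁⟩ := hcon
    set S := Set.Icc 0 t₁ ∩ f ⁻¹' (Set.Ici L) with hS
    have hsub : Set.Icc 0 t₁ ⊆ Set.Icc 0 T := Set.Icc_subset_Icc le_rfl ht₁.2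
    have hSc : IsClosed S :=
      (hcont.mono hsub).preimage_isClosed_of_isClosed isClosed_Icc isClosed_Ici
    have h0S : (0:ℝ) ∈ S := ⟨⟨le_refl 0, ht₁.1⟩, by rw [Set.mem_preimage, hf0]; exact hp⟩
    have hSb : BddAbove S := (isCompact_Icc.bddAbove).mono Set.inter_subset_left
    set s := sSup S with hsdef
    have hsS : s ∈ S := hSc.csSup_mem ⟨0, h0S⟩ hSb
    have hst₁ : s ≤ t₁ := csSup_le ⟨0, h0S⟩ (fun u hu => hu.1.2)
    have hs0 : 0 ≤ s := le_csSup hSb h0S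
    have hfs : L ≤ f s := hsS.2
    have hslt : s < t₁ := lt_of_le_of_ne hst₁ (by intro h; rw [h] at hfs; exact absurd hfs (not_le.2 hft₁))
    have hlt : ∀ u ∈ Set.Ioo s t₁, f u < L := by
      intro u hu
      by_contra h
      push_neg at h
      have huS : u ∈ S := ⟨⟨le_trans hs0 hu.1.le, hu.2.le⟩, h⟩
      exact absurd (le_csSup hSb huS) (not_le.2 hu.1)
    have hsubT : Set.Icc s t₁ ⊆ Set.Icc 0 T := Set.Icc_subset_Icc hs0 ht₁.2
    have hmono : MonotoneOn f (Set.Icc s t₁) := by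
      apply monotoneOn_of_hasDerivWithinAt_nonneg (convex_Icc s t₁) (hcont.mono hsubT)
        (f' := fun u => F (f u))
      · intro x hx
        rw [interior_Icc] at hx
        refine (hfd x (hsubT ⟨hx.1.le, hx.2.le⟩)).mono ?_
        rw [interior_Icc]
        exact fun u hu => hsubT ⟨hu.1.le, hu.2.le⟩
      · intro x hx
        rw [interior_Icc] at hx
        have hcf : c (f x) = L := by
          rw [hc]
          simp only
          rw [max_eq_right (hlt x hx).le, min_eq_left hLM]
        show 0 ≤ q - φ (c (f x))
        rw [hcf]
        linarith
    have hle : f s ≤ f t₁ :=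
      hmono (Set.left_mem_Icc.2 hst₁) (Set.right_mem_Icc.2 hst₁) hst₁
    linarith
  -- claim B : stays below M via Gronwall
  have hBc : ∀ t ∈ Set.Icc 0 T, f t ≤ M := by
    have hgron := le_gronwallBound_of_liminf_deriv_right_le (f := f)
      (f' := fun x => F (f x)) (δ := p) (K := B₂) (ε := ε) (a := 0) (b := T) hcont
      (fun x hx r hr => by
        have hder : HasDerivWithinAt f (F (f x)) (Set.Ici x) x :=
          derivIci_of_Icc hx (hfd x ⟨hx.1, hx.2.le⟩)
        refine (hder.liminf_right_slope_le hr).mono (fun z hz => ?_)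
        rwa [slope_def_field, div_eq_inv_mul] at hz)
      (le_of_eq hf0)
      (fun x hx => by
        have hfx : L ≤ f x := hA x ⟨hx.1, hx.2.le⟩
        have hlow' := hlow (c (f x)) (hcmem (f x)).1
        have hcv : c (f x) = min (f x) M := by
          rw [hc]; simp only; rw [max_eq_left hfx]
        have habs : |c (f x)| ≤ f x - 2 * L := by
          rw [hcv]
          rcases le_total (f x) M with h | h
          · rw [min_eq_left h, abs_le]
            constructor <;> linarith
          · rw [min_eq_right h, abs_of_nonneg hM0]
            linarith
        have hmul : B₂ * |c (f x)| ≤ B₂ * (f x - 2 * L) :=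
          mul_le_mul_of_nonneg_left habs hB₂
        show q - φ (c (f x)) ≤ B₂ * f x + ε
        rw [hε]
        linarith)
    intro t ht
    have h1 := hgron t ht
    rw [sub_zero] at h1
    have h2 := hG t ht
    rw [Real.norm_eq_abs] at h2
    have h3 := (abs_le.1 h2).2
    have : gronwallBound p B₂ ε t ≤ M :=
      le_trans h3 (le_trans (le_max_left G 0) (le_max_left _ p))
    linarith
  have hcfix : ∀ t ∈ Set.Icc 0 T, c (f t) = f t := by
    intro t ht
    rw [hc]; simp only
    rw [max_eq_left (hA t ht), min_eq_left (hBc t ht)]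
  refine ⟨f, hf0, hA, fun t ht => ?_⟩
  have hd := hfd t ht
  have heq : F (f t) = q - φ (f t) := by
    show q - φ (c (f t)) = q - φ (f t)
    rw [hcfix t ht]
  rwa [heq] at hd

/-- Characterization of global solvability of the generalized Riccati ODE: φ(L) ≤ 0. -/
theorem stmt_8 (L : ℝ) (hL : L ≤ 0) (φ : ℝ → ℝ)
    (hconv : ConvexOn ℝ (Set.Ici L) φ)
    (hC1 : ContDiffOn ℝ 1 φ (Set.Ici L))
    (hφ0 : φ 0 = 0) :
    φ L ≤ 0 ↔
      ∀ q : ℝ, 0 ≤ q → ∀ p : ℝ, L ≤ p →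
        ∃ v : ℝ → ℝ,
          (∀ t : ℝ, 0 ≤ t → L ≤ v t) ∧ v 0 = p ∧
          (∀ t : ℝ, 0 ≤ t → HasDerivWithinAt v (q - φ (v t)) (Set.Ici 0) t) := by
  constructor
  · intro hφL q hq p hp
    have hsol : ∀ n : ℕ, ∃ v : ℝ → ℝ, v 0 = p ∧ (∀ t ∈ Set.Icc 0 ((n:ℝ)+1), L ≤ v t) ∧
        ∀ t ∈ Set.Icc 0 ((n:ℝ)+1), HasDerivWithinAt v (q - φ (v t)) (Set.Icc 0 ((n:ℝ)+1)) t :=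
      fun n => solOnIcc hL hconv hC1 hφ0 hφL hq hp (by positivity)
    choose w hw0 hwL hwd using hsol
    have hwc : ∀ n : ℕ, ContinuousOn (w n) (Set.Icc 0 ((n:ℝ)+1)) :=
      fun n t ht => (hwd n t ht).continuousWithinAt
    -- uniqueness ⇒ agreement
    have huniq : ∀ n m : ℕ, n ≤ m → Set.EqOn (w n) (w m) (Set.Icc 0 ((n:ℝ)+1)) := by
      intro n m hnm
      have hnm' : ((n:ℝ)+1) ≤ ((m:ℝ)+1) := by
        have : (n:ℝ) ≤ m := Nat.cast_le.2 hnm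
        linarith
      have hsub : Set.Icc (0:ℝ) ((n:ℝ)+1) ⊆ Set.Icc 0 ((m:ℝ)+1) := Set.Icc_subset_Icc le_rfl hnm'
      obtain ⟨Bn, hBn⟩ := isCompact_Icc.exists_bound_of_continuousOn (hwc n)
      obtain ⟨Bm, hBm⟩ := isCompact_Icc.exists_bound_of_continuousOn (hwc m)
      set B := max Bn Bm with hBdef
      have hLB : L ≤ B := by
        have h0 : (0:ℝ) ∈ Set.Icc (0:ℝ) ((n:ℝ)+1) := by
          constructor
          · exact le_refl 0
          · positivity
        have := hBn 0 h0
        rw [Real.norm_eq_abs, hw0 n] at this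
        have := (abs_le.1 this).2
        calc L ≤ p := hp
          _ ≤ Bn := this
          _ ≤ B := le_max_left _ _
      obtain ⟨K, hK⟩ := lipOnIcc hLB hC1
      have hKv : ∀ t : ℝ, LipschitzOnWith K (fun x => q - φ x) (Set.Icc L B) := by
        intro t
        rw [lipschitzOnWith_iff_dist_le_mul]
        intro x hx y hy
        have := (lipschitzOnWith_iff_dist_le_mul.1 hK) _ hx _ hy
        calc dist (q - φ x) (q - φ y) = dist (φ x) (φ y) := dist_sub_left q _ _
          _ ≤ K * dist x y := this
      apply ODE_solution_unique_of_mem_Icc_right (v := fun _ x => q - φ x)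
        (s := fun _ => Set.Icc L B) (fun t _ => hKv t) (hwc n)
        (fun t ht => derivIci_of_Icc ht (hwd n t ⟨ht.1, ht.2.le⟩))
        (fun t ht => by
          have h1 := hBn t ⟨ht.1, ht.2.le⟩
          rw [Real.norm_eq_abs] at h1
          exact ⟨hwL n t ⟨ht.1, ht.2.le⟩, le_trans (le_abs_self _)
            (le_trans h1 (le_max_left _ _))⟩)
        ((hwc m).mono hsub)
        (fun t ht => derivIci_of_Icc ⟨ht.1, lt_of_lt_of_le ht.2 hnm'⟩
          (hwd m t (hsub ⟨ht.1, ht.2.le⟩)))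
        (fun t ht => by
          have h1 := hBm t (hsub ⟨ht.1, ht.2.le⟩)
          rw [Real.norm_eq_abs] at h1
          exact ⟨hwL m t (hsub ⟨ht.1, ht.2.le⟩), le_trans (le_abs_self _)
            (le_trans h1 (le_max_right _ _))⟩)
        (by rw [hw0 n, hw0 m])
    set v : ℝ → ℝ := fun t => w ⌊t⌋₊ t with hv
    have hagree : ∀ n : ℕ, ∀ t ∈ Set.Icc (0:ℝ) ((n:ℝ)+1), v t = w n t := by
      intro n t ht
      rw [hv]
      simp only
      set k := ⌊t⌋₊ with hk
      have htk : t ∈ Set.Icc (0:ℝ) ((k:ℝ)+1) := ⟨ht.1, (Nat.lt_floor_add_one t).le⟩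
      rcases le_or_gt k n with h | h
      · exact huniq k n h htk
      · exact (huniq n k h.le ht).symm
    have hmemIcc : ∀ t : ℝ, 0 ≤ t → t ∈ Set.Icc (0:ℝ) ((⌊t⌋₊:ℝ)+1) :=
      fun t ht => ⟨ht, (Nat.lt_floor_add_one t).le⟩
    refine ⟨v, ?_, ?_, ?_⟩
    · intro t ht
      rw [hagree ⌊t⌋₊ t (hmemIcc t ht)]
      exact hwL _ t (hmemIcc t ht)
    · rw [hagree 0 0 ⟨le_refl 0, by norm_num⟩]
      exact hw0 0
    · intro t ht
      set n := ⌊t⌋₊ with hn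
      have htn : t < (n:ℝ) + 1 := Nat.lt_floor_add_one t
      have hmem2 : Set.Icc (0:ℝ) ((n:ℝ)+1) ∈ nhdsWithin t (Set.Ici 0) :=
        Filter.mem_of_superset (inter_mem_nhdsWithin (Set.Ici 0) (Iio_mem_nhds htn))
          (fun u hu => ⟨hu.1, hu.2.le⟩)
      have hd := (hwd n t ⟨ht, htn.le⟩).mono_of_mem_nhdsWithin hmem2
      have heq : v =ᶠ[nhdsWithin t (Set.Ici 0)] w n :=
        Filter.eventuallyEq_of_mem hmem2 (fun u hu => hagree n u hu)
      have hvt : v t = w n t := hagree n t ⟨ht, htn.le⟩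
      have hres := hd.congr_of_eventuallyEq heq hvt
      rwa [← hvt] at hres
  · intro h
    obtain ⟨v, hvL, hv0, hvd⟩ := h 0 le_rfl L le_rfl
    by_contra hcon
    push_neg at hcon
    have hd := hvd 0 le_rfl
    rw [hv0] at hd
    have hr : (0:ℝ) - φ L < 0 := by linarith
    have hfreq := hd.liminf_right_slope_le hr
    obtain ⟨z, hz1, hz2⟩ := (hfreq.and_eventually eventually_mem_nhdsWithin).exists
    rw [slope_def_field, hv0] at hz1
    rw [Set.mem_Ioi] at hz2
    have hvz : L ≤ v z := hvL z hz2.le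
    have : (v z - L) / (z - 0) < 0 := hz1
    rw [sub_zero] at this
    have hneg : v z - L < 0 := by
      by_contra hge
      push_neg at hge
      exact absurd this (not_lt.2 (div_nonneg hge hz2.le))
    linarith
end

section
/- Let p > 0 and let φ : [0, p] → ℝ be locally Lipschitz with φ(0) = 0, φ(z) > 0 for all z ∈ (0, p], and such that φ(z)/z → b as z → 0⁺ for some b > 0. Then there is a unique global solution v : [0, ∞) → (0, p] of v′(t) = −φ(v(t)) with v(0) = p; v is strictly decreasing, v(t) → 0 as t → ∞, the integral ∫₀^p z/φ(z) dz is finite, and ∫₀^∞ v(s) ds = ∫₀^p z/φ(z) dz. -/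
open Real Set Filter MeasureTheory

namespace Stmt17Aux

open Topology intervalIntegral

noncomputable def Fint (φ : ℝ → ℝ) (p : ℝ) : ℝ → ℝ := fun z => ∫ u in z..p, (φ u)⁻¹

variable {p b : ℝ} {φ : ℝ → ℝ}

lemma hinvc (hφc : ContinuousOn φ (Icc 0 p))
    (hpos : ∀ z ∈ Set.Ioc (0:ℝ) p, 0 < φ z) :
    ContinuousOn (fun u => (φ u)⁻¹) (Ioc 0 p) :=
  (hφc.mono Ioc_subset_Icc_self).inv₀ (fun z hz => (hpos z hz).ne')

lemma hinvInt (hp : 0 < p) (hφc : ContinuousOn φ (Icc 0 p))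
    (hpos : ∀ z ∈ Set.Ioc (0:ℝ) p, 0 < φ z) {z1 z2 : ℝ} (h1 : 0 < z1) (h12 : z1 ≤ z2)
    (h2 : z2 ≤ p) : IntervalIntegrable (fun u => (φ u)⁻¹) volume z1 z2 := by
  apply ContinuousOn.intervalIntegrable
  apply (hinvc hφc hpos).mono
  rw [uIcc_of_le h12]
  exact fun x hx => ⟨lt_of_lt_of_le h1 hx.1, le_trans hx.2 h2⟩

lemma Fint_p : Fint φ p p = 0 := integral_same

lemma Fint_split (hp : 0 < p) (hφc : ContinuousOn φ (Icc 0 p))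
    (hpos : ∀ z ∈ Set.Ioc (0:ℝ) p, 0 < φ z) {z1 z2 : ℝ} (h1 : 0 < z1) (h12 : z1 ≤ z2)
    (h2 : z2 ≤ p) :
    Fint φ p z1 = (∫ u in z1..z2, (φ u)⁻¹) + Fint φ p z2 :=
  (integral_add_adjacent_intervals (hinvInt hp hφc hpos h1 h12 h2)
    (hinvInt hp hφc hpos (h1.trans_le h12) h2 le_rfl)).symm

lemma Fint_anti (hp : 0 < p) (hφc : ContinuousOn φ (Icc 0 p))
    (hpos : ∀ z ∈ Set.Ioc (0:ℝ) p, 0 < φ z) {z1 z2 : ℝ} (h1 : 0 < z1) (h12 : z1 < z2)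
    (h2 : z2 ≤ p) : Fint φ p z2 < Fint φ p z1 := by
  rw [Fint_split hp hφc hpos h1 h12.le h2]
  have : 0 < ∫ u in z1..z2, (φ u)⁻¹ := by
    apply intervalIntegral.intervalIntegral_pos_of_pos_on
      (hinvInt hp hφc hpos h1 h12.le h2) _ h12
    intro x hx
    exact inv_pos.2 (hpos x ⟨h1.trans hx.1, hx.2.le.trans h2⟩)
  linarith

lemma Fint_anti' (hp : 0 < p) (hφc : ContinuousOn φ (Icc 0 p))
    (hpos : ∀ z ∈ Set.Ioc (0:ℝ) p, 0 < φ z) {z1 z2 : ℝ} (h1 : 0 < z1) (h12 : z1 ≤ z2)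
    (h2 : z2 ≤ p) : Fint φ p z2 ≤ Fint φ p z1 := by
  rcases eq_or_lt_of_le h12 with h | h
  · rw [h]
  · exact (Fint_anti hp hφc hpos h1 h h2).le

lemma Fint_nonneg (hp : 0 < p) (hφc : ContinuousOn φ (Icc 0 p))
    (hpos : ∀ z ∈ Set.Ioc (0:ℝ) p, 0 < φ z) {z : ℝ} (hz : z ∈ Ioc (0:ℝ) p) :
    0 ≤ Fint φ p z := by
  have := Fint_anti' hp hφc hpos hz.1 hz.2 le_rfl
  rwa [Fint_p] at this

lemma Fint_hasDerivAt (hp : 0 < p) (hφc : ContinuousOn φ (Icc 0 p))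
    (hpos : ∀ z ∈ Set.Ioc (0:ℝ) p, 0 < φ z) {z : ℝ} (hz : z ∈ Ioo (0:ℝ) p) :
    HasDerivAt (Fint φ p) (-(φ z)⁻¹) z := by
  have hat : ContinuousAt (fun u => (φ u)⁻¹) z := by
    have : Ioo (0:ℝ) p ∈ 𝓝 z := Ioo_mem_nhds hz.1 hz.2
    exact ((hinvc hφc hpos).mono Ioo_subset_Ioc_self).continuousAt this
  exact integral_hasDerivAt_left (hinvInt hp hφc hpos hz.1 hz.2.le le_rfl)
    ⟨Ioo 0 p, Ioo_mem_nhds hz.1 hz.2,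
      (((hinvc hφc hpos).mono Ioo_subset_Ioc_self)).aestronglyMeasurable measurableSet_Ioo⟩ hat

lemma Fint_hasDerivWithinAt_p (hp : 0 < p) (hφc : ContinuousOn φ (Icc 0 p))
    (hpos : ∀ z ∈ Set.Ioc (0:ℝ) p, 0 < φ z) :
    HasDerivWithinAt (Fint φ p) (-(φ p)⁻¹) (Iic p) p := by
  apply integral_hasDerivWithinAt_left (hinvInt hp hφc hpos hp le_rfl le_rfl) (t := Iic p)
  · exact ⟨Ioc 0 p, Ioc_mem_nhdsLE hp,
      ((hinvc hφc hpos).mono (by intro x hx; exact hx)).aestronglyMeasurable measurableSet_Ioc⟩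
  · have hmem : Ioi (0:ℝ) ∈ 𝓝[Iic p] p := mem_nhdsWithin_of_mem_nhds (Ioi_mem_nhds hp)
    have heq : 𝓝[Iic p] p = 𝓝[Ioc 0 p] p := by
      rw [show Ioc (0:ℝ) p = Ioi 0 ∩ Iic p from (Ioi_inter_Iic).symm,
        nhdsWithin_inter_of_mem hmem]
    unfold ContinuousWithinAt
    rw [heq]
    exact hinvc hφc hpos p ⟨hp, le_rfl⟩

lemma Fint_hasDerivWithin (hp : 0 < p) (hφc : ContinuousOn φ (Icc 0 p))
    (hpos : ∀ z ∈ Set.Ioc (0:ℝ) p, 0 < φ z) {z : ℝ} (hz : z ∈ Ioc (0:ℝ) p) :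
    HasDerivWithinAt (Fint φ p) (-(φ z)⁻¹) (Ioc 0 p) z := by
  rcases eq_or_lt_of_le hz.2 with h | h
  · rw [h]
    exact (Fint_hasDerivWithinAt_p hp hφc hpos).mono Ioc_subset_Iic_self
  · exact (Fint_hasDerivAt hp hφc hpos ⟨hz.1, h⟩).hasDerivWithinAt

lemma Fint_top (hp : 0 < p) (hb : 0 < b) (hφc : ContinuousOn φ (Icc 0 p))
    (hpos : ∀ z ∈ Set.Ioc (0:ℝ) p, 0 < φ z)
    (hlim : Filter.Tendsto (fun z => φ z / z) (nhdsWithin 0 (Set.Ioi 0)) (nhds b)) :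
    ∀ t : ℝ, 0 ≤ t → ∃ z ∈ Ioc (0:ℝ) p, t ≤ Fint φ p z := by
  intro t ht
  obtain ⟨δ', hδ'pos, hδ'⟩ := Metric.tendsto_nhdsWithin_nhds.1 hlim b hb
  set δ : ℝ := min (δ'/2) p with hδdef
  have hδpos : 0 < δ := lt_min (by linarith) hp
  have hδp : δ ≤ p := min_le_right _ _
  have key : ∀ u ∈ Ioc (0:ℝ) δ, φ u ≤ 2 * b * u := by
    intro u hu
    have hub : dist u 0 < δ' := by
      rw [Real.dist_eq, sub_zero, abs_of_pos hu.1]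
      calc u ≤ δ := hu.2
        _ ≤ δ'/2 := min_le_left _ _
        _ < δ' := by linarith
    have := hδ' hu.1 hub
    rw [Real.dist_eq] at this
    have h2 : φ u / u < 2 * b := by
      have := abs_lt.1 this
      linarith [this.2]
    have hupos := hu.1
    calc φ u = (φ u / u) * u := by field_simp
      _ ≤ 2 * b * u := by nlinarith
  set z : ℝ := δ * Real.exp (-(2*b*t) - 1) with hzdef
  have hzpos : 0 < z := mul_pos hδpos (Real.exp_pos _)
  have hzδ : z < δ := by
    have : Real.exp (-(2*b*t) - 1) < 1 := by
      rw [Real.exp_lt_one_iff]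
      have : 0 ≤ 2*b*t := by positivity
      linarith
    nlinarith
  refine ⟨z, ⟨hzpos, hzδ.le.trans hδp⟩, ?_⟩
  have hmono : (∫ u in z..δ, (2*b*u)⁻¹) ≤ ∫ u in z..δ, (φ u)⁻¹ := by
    apply intervalIntegral.integral_mono_on hzδ.le
    · apply ContinuousOn.intervalIntegrable
      intro x hx
      rw [uIcc_of_le hzδ.le] at hx
      exact ((continuous_const.mul continuous_id).continuousWithinAt).inv₀
        (by nlinarith [hx.1] : (2*b*x) ≠ 0) |>.congr (fun y _ => rfl) rfl
    · exact hinvInt hp hφc hpos hzpos hzδ.le hδp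
    · intro x hx
      have hx1 : 0 < x := hzpos.trans_le hx.1
      have hφx : 0 < φ x := hpos x ⟨hx1, hx.2.trans hδp⟩
      have h2bx : (0:ℝ) < 2 * b * x := by positivity
      rw [inv_le_inv₀ h2bx hφx]
      exact key x ⟨hx1, hx.2⟩
  have hcomp : (∫ u in z..δ, (2*b*u)⁻¹) = (2*b)⁻¹ * Real.log (δ / z) := by
    have : ∀ u : ℝ, (2*b*u)⁻¹ = (2*b)⁻¹ * u⁻¹ := by
      intro u; rw [mul_inv]
    simp_rw [this]
    rw [intervalIntegral.integral_const_mul,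
      integral_inv (by rw [Set.uIcc_of_le hzδ.le]; exact fun h => absurd h.1 (not_le.2 hzpos))]
  have hlog : Real.log (δ / z) = 2*b*t + 1 := by
    rw [hzdef, show δ / (δ * Real.exp (-(2*b*t) - 1)) = Real.exp (2*b*t+1) by
      rw [div_eq_iff (by positivity), mul_comm (Real.exp (2*b*t+1)), mul_assoc, ← Real.exp_add,
        show (-(2*b*t) - 1) + (2*b*t+1) = 0 by ring, Real.exp_zero, mul_one]]
    exact Real.log_exp _
  have h1 : Fint φ p z ≥ (∫ u in z..δ, (φ u)⁻¹) + Fint φ p δ := by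
    rw [Fint_split hp hφc hpos hzpos hzδ.le hδp]
  have h2 : (0:ℝ) ≤ Fint φ p δ := Fint_nonneg hp hφc hpos ⟨hδpos, hδp⟩
  have h3 : (2*b)⁻¹ * Real.log (δ / z) ≥ t := by
    rw [hlog]
    rw [ge_iff_le, le_inv_mul_iff₀ (by positivity)]
    nlinarith
  linarith [hmono, hcomp ▸ h3]

lemma Fint_surj (hp : 0 < p) (hb : 0 < b) (hφc : ContinuousOn φ (Icc 0 p))
    (hpos : ∀ z ∈ Set.Ioc (0:ℝ) p, 0 < φ z)
    (hlim : Filter.Tendsto (fun z => φ z / z) (nhdsWithin 0 (Set.Ioi 0)) (nhds b)) :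
    ∀ t : ℝ, 0 ≤ t → ∃ z ∈ Ioc (0:ℝ) p, Fint φ p z = t := by
  intro t ht
  obtain ⟨z0, hz0, hz0t⟩ := Fint_top hp hb hφc hpos hlim t ht
  rcases eq_or_lt_of_le hz0.2 with h | h
  · refine ⟨p, ⟨hp, le_rfl⟩, ?_⟩
    rw [h, Fint_p] at hz0t
    rw [Fint_p]; linarith
  · have hcont : ContinuousOn (Fint φ p) (Icc z0 p) := by
      intro x hx
      exact ((Fint_hasDerivWithin hp hφc hpos
        ⟨hz0.1.trans_le hx.1, hx.2⟩).continuousWithinAt).mono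
        (fun y hy => ⟨hz0.1.trans_le hy.1, hy.2⟩)
    have := intermediate_value_Icc' hz0.2 hcont
    have hmem : t ∈ Icc (Fint φ p p) (Fint φ p z0) := ⟨Fint_p ▸ ht, hz0t⟩
    obtain ⟨z, hz, hzt⟩ := this hmem
    exact ⟨z, ⟨hz0.1.trans_le hz.1, hz.2⟩, hzt⟩

lemma gbound (hp : 0 < p) (hb : 0 < b) (hφc : ContinuousOn φ (Icc 0 p))
    (hpos : ∀ z ∈ Set.Ioc (0:ℝ) p, 0 < φ z)
    (hlim : Filter.Tendsto (fun z => φ z / z) (nhdsWithin 0 (Set.Ioi 0)) (nhds b)) :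
    ∃ M : ℝ, 0 ≤ M ∧ (∀ z ∈ Ioc (0:ℝ) p, ‖z / φ z‖ ≤ M) ∧
      MeasureTheory.IntegrableOn (fun z => z / φ z) (Set.Ioc 0 p) := by
  obtain ⟨δ', hδ'pos, hδ'⟩ := Metric.tendsto_nhdsWithin_nhds.1 hlim (b/2) (by linarith)
  set δ : ℝ := min (δ'/2) p with hδdef
  have hδpos : 0 < δ := lt_min (by linarith) hp
  have hδp : δ ≤ p := min_le_right _ _
  have hcont : ContinuousOn (fun z => z / φ z) (Ioc (0:ℝ) p) := by
    apply ContinuousOn.div continuousOn_id (hφc.mono Ioc_subset_Icc_self)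
    exact fun z hz => (hpos z hz).ne'
  have hbound1 : ∀ z ∈ Ioc (0:ℝ) δ, ‖z / φ z‖ ≤ 2 / b := by
    intro z hz
    have hzb : dist z 0 < δ' := by
      rw [Real.dist_eq, sub_zero, abs_of_pos hz.1]
      calc z ≤ δ := hz.2
        _ ≤ δ'/2 := min_le_left _ _
        _ < δ' := by linarith
    have h1 := hδ' hz.1 hzb
    rw [Real.dist_eq] at h1
    have h2 : b / 2 < φ z / z := by
      have := abs_lt.1 h1
      linarith [this.1]
    have hφz : 0 < φ z := hpos z ⟨hz.1, hz.2.trans hδp⟩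
    have h3 : 0 < z := hz.1
    rw [Real.norm_eq_abs, abs_of_nonneg (by positivity)]
    rw [div_le_div_iff₀ hφz hb]
    rw [div_lt_div_iff₀ (by linarith) h3] at h2
    nlinarith
  obtain ⟨C, hC⟩ := (isCompact_Icc (a := δ) (b := p)).exists_bound_of_continuousOn
    (hcont.mono (fun x hx => ⟨hδpos.trans_le hx.1, hx.2⟩))
  refine ⟨max (2/b) C, le_max_of_le_left (by positivity), ?_, ?_⟩
  · intro z hz
    rcases le_or_gt z δ with h | h
    · exact le_max_of_le_left (hbound1 z ⟨hz.1, h⟩)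
    · exact le_max_of_le_right (hC z ⟨h.le, hz.2⟩)
  · refine ⟨hcont.aestronglyMeasurable measurableSet_Ioc,
      HasFiniteIntegral.restrict_of_bounded (C := max (2/b) C) measure_Ioc_lt_top ?_⟩
    rw [ae_restrict_iff' measurableSet_Ioc]
    apply ae_of_all
    intro z hz
    rcases le_or_gt z δ with h | h
    · exact le_max_of_le_left (hbound1 z ⟨hz.1, h⟩)
    · exact le_max_of_le_right (hC z ⟨h.le, hz.2⟩)

lemma cov (hp : 0 < p) (v : ℝ → ℝ)
    (hφc : ContinuousOn φ (Icc 0 p))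
    (hpos : ∀ z ∈ Set.Ioc (0:ℝ) p, 0 < φ z)
    (hvmem : ∀ t : ℝ, 0 ≤ t → v t ∈ Ioc (0:ℝ) p)
    (hv0 : v 0 = p)
    (hvcont : ∀ t0 : ℝ, 0 ≤ t0 → Tendsto v (𝓝[Ici 0] t0) (𝓝 (v t0)))
    (hderiv_pos : ∀ t : ℝ, 0 < t → HasDerivAt v (-(φ (v t))) t) :
    ∀ T : ℝ, 0 ≤ T → (∫ s in (0:ℝ)..T, v s) = ∫ z in Ioc (v T) p, z / φ z := by
  intro T hT
  have hIccIci : Icc (0:ℝ) T ⊆ Ici 0 := fun x hx => hx.1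
  have hvc : ContinuousOn v (Icc 0 T) := by
    intro x hx
    exact (hvcont x hx.1).mono_left (nhdsWithin_mono _ hIccIci)
  have huIcc : uIcc (0:ℝ) T = Icc 0 T := uIcc_of_le hT
  have hmaps : MapsTo v (Icc 0 T) (Ioc 0 p) := fun x hx => hvmem x hx.1
  have hcov := intervalIntegral.integral_comp_smul_deriv''
    (f := v) (f' := fun s => -(φ (v s))) (g := fun z => z / φ z) (a := 0) (b := T)
    (by rw [huIcc]; exact hvc)
    (by
      rw [min_eq_left hT, max_eq_right hT]
      intro x hx
      exact (hderiv_pos x hx.1).hasDerivWithinAt)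
    (by
      rw [huIcc]
      exact ((hφc.mono Ioc_subset_Icc_self).comp hvc hmaps).neg)
    (by
      have hgc : ContinuousOn (fun z => z / φ z) (Ioc (0:ℝ) p) :=
        ContinuousOn.div continuousOn_id (hφc.mono Ioc_subset_Icc_self)
          (fun z hz => (hpos z hz).ne')
      apply hgc.mono
      rw [huIcc]
      exact mapsTo_iff_image_subset.1 hmaps)
  have hlhs : (∫ x in (0:ℝ)..T, (-(φ (v x))) • ((fun z => z / φ z) ∘ v) x)
      = ∫ x in (0:ℝ)..T, -(v x) := by
    apply intervalIntegral.integral_congr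
    intro x hx
    rw [huIcc] at hx
    have hφvx : φ (v x) ≠ 0 := (hpos _ (hvmem x hx.1)).ne'
    simp only [Function.comp_apply, smul_eq_mul]
    field_simp
  rw [hlhs] at hcov
  rw [intervalIntegral.integral_neg] at hcov
  have : (∫ s in (0:ℝ)..T, v s) = - ∫ u in (v 0)..(v T), u / φ u := by
    rw [← hcov]; ring
  rw [this, hv0, ← intervalIntegral.integral_symm,
    intervalIntegral.integral_of_le (hvmem T hT).2]

lemma intEq (M : ℝ) (hp : 0 < p) (v : ℝ → ℝ)
    (hgbd : ∀ z ∈ Ioc (0:ℝ) p, ‖z / φ z‖ ≤ M)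
    (hgint : MeasureTheory.IntegrableOn (fun z => z / φ z) (Set.Ioc 0 p))
    (hvmem : ∀ t : ℝ, 0 ≤ t → v t ∈ Ioc (0:ℝ) p)
    (hlb : ∀ t : ℝ, 0 ≤ v t)
    (hvcont : ∀ t0 : ℝ, 0 ≤ t0 → Tendsto v (𝓝[Ici 0] t0) (𝓝 (v t0)))
    (htendv : Tendsto v atTop (𝓝 0))
    (hcov : ∀ T : ℝ, 0 ≤ T → (∫ s in (0:ℝ)..T, v s) = ∫ z in Ioc (v T) p, z / φ z)
    (hgpos : ∀ z ∈ Ioc (0:ℝ) p, 0 ≤ z / φ z) :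
    MeasureTheory.IntegrableOn v (Set.Ici 0) ∧
      (∫ t in Set.Ici (0:ℝ), v t) = ∫ z in Set.Ioc (0:ℝ) p, z / φ z := by
  set g : ℝ → ℝ := fun z => z / φ z with hgdef
  set I : ℝ := ∫ z in Ioc (0:ℝ) p, g z with hI
  have hvic : ∀ i : ℝ, IntegrableOn v (Ioc 0 i) := by
    intro i
    rcases le_or_gt i 0 with h | h
    · rw [Ioc_eq_empty (by simpa using h)]
      exact integrableOn_empty
    · have : ContinuousOn v (Icc 0 i) := fun x hx =>
        (hvcont x hx.1).mono_left (nhdsWithin_mono _ (fun y hy => hy.1))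
      exact (this.integrableOn_Icc).mono_set Ioc_subset_Icc_self
  have hbnd : ∀ T : ℝ, 0 ≤ T → (∫ s in (0:ℝ)..T, ‖v s‖) ≤ I := by
    intro T hT
    have h1 : (∫ s in (0:ℝ)..T, ‖v s‖) = ∫ s in (0:ℝ)..T, v s := by
      apply intervalIntegral.integral_congr
      intro x hx
      exact Real.norm_of_nonneg (hlb x)
    rw [h1, hcov T hT]
    apply setIntegral_mono_set hgint
    · rw [EventuallyLE, ae_restrict_iff' measurableSet_Ioc]
      exact ae_of_all _ hgpos
    · apply HasSubset.Subset.eventuallyLE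
      exact Ioc_subset_Ioc_left (hvmem T hT).1.le
  have hvint : IntegrableOn v (Ioi 0) := by
    apply integrableOn_Ioi_of_intervalIntegral_norm_bounded I 0 hvic tendsto_id
    filter_upwards [eventually_ge_atTop (0:ℝ)] with i hi
    exact hbnd i hi
  have hvint' : IntegrableOn v (Ici 0) := by
    rwa [integrableOn_Ici_iff_integrableOn_Ioi]
  refine ⟨hvint', ?_⟩
  have hA : Tendsto (fun i => ∫ s in (0:ℝ)..i, v s) atTop (𝓝 (∫ t in Ioi (0:ℝ), v t)) :=
    intervalIntegral_tendsto_integral_Ioi 0 hvint tendsto_id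
  have hsplit : ∀ T : ℝ, 0 ≤ T →
      I = (∫ z in Ioc (0:ℝ) (v T), g z) + ∫ z in Ioc (v T) p, g z := by
    intro T hT
    rw [hI, ← Ioc_union_Ioc_eq_Ioc (hvmem T hT).1.le (hvmem T hT).2]
    apply setIntegral_union (Ioc_disjoint_Ioc_of_le le_rfl) measurableSet_Ioc
    · exact hgint.mono_set (Ioc_subset_Ioc_right (hvmem T hT).2)
    · exact hgint.mono_set (Ioc_subset_Ioc_left (hvmem T hT).1.le)
  have hsmall : Tendsto (fun T => ∫ z in Ioc (0:ℝ) (v T), g z) atTop (𝓝 0) := by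
    apply squeeze_zero_norm' (a := fun T => M * v T)
    · filter_upwards [eventually_ge_atTop (0:ℝ)] with T hT
      have : ‖∫ z in Ioc (0:ℝ) (v T), g z‖ ≤ M * (volume (Ioc (0:ℝ) (v T))).toReal := by
        apply norm_setIntegral_le_of_norm_le_const (by exact measure_Ioc_lt_top)
        intro z hz
        exact hgbd z ⟨hz.1, hz.2.trans (hvmem T hT).2⟩
      rwa [Real.volume_Ioc, sub_zero, ENNReal.toReal_ofReal (hlb T)] at this
    · simpa using htendv.const_mul M
  have hB : Tendsto (fun T => ∫ s in (0:ℝ)..T, v s) atTop (𝓝 I) := by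
    have h1 : Tendsto (fun T => I - ∫ z in Ioc (0:ℝ) (v T), g z) atTop (𝓝 (I - 0)) :=
      tendsto_const_nhds.sub hsmall
    rw [sub_zero] at h1
    apply h1.congr'
    filter_upwards [eventually_ge_atTop (0:ℝ)] with T hT
    rw [hcov T hT]
    have := hsplit T hT
    linarith
  have := tendsto_nhds_unique hA hB
  rw [MeasureTheory.integral_Ici_eq_integral_Ioi]
  exact this

lemma uniq (hp : 0 < p) (F : ℝ → ℝ)
    (hpos : ∀ z ∈ Set.Ioc (0:ℝ) p, 0 < φ z)
    (hFp : F p = 0)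
    (hFd : ∀ z ∈ Ioc (0:ℝ) p, HasDerivWithinAt F (-(φ z)⁻¹) (Ioc 0 p) z)
    (hinj : ∀ {z1 z2 : ℝ}, z1 ∈ Ioc (0:ℝ) p → z2 ∈ Ioc (0:ℝ) p → F z1 = F z2 → z1 = z2)
    (v : ℝ → ℝ)
    (hvmem : ∀ t : ℝ, 0 ≤ t → v t ∈ Ioc (0:ℝ) p)
    (hvF : ∀ t : ℝ, 0 ≤ t → F (v t) = t)
    (w : ℝ → ℝ)
    (hw1 : ∀ t : ℝ, 0 ≤ t → w t ∈ Set.Ioc 0 p) (hw0 : w 0 = p)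
    (hw' : ∀ t : ℝ, 0 ≤ t → HasDerivWithinAt w (-(φ (w t))) (Set.Ici 0) t) :
    ∀ t : ℝ, 0 ≤ t → w t = v t := by
  have hmaps : MapsTo w (Ici 0) (Ioc 0 p) := fun x hx => hw1 x hx
  have hG : ∀ s : ℝ, 0 ≤ s → HasDerivWithinAt (fun u => F (w u) - u) 0 (Ici 0) s := by
    intro s hs
    have hcomp := (hFd (w s) (hw1 s hs)).comp s (hw' s hs) hmaps
    have hval : -(φ (w s))⁻¹ * -(φ (w s)) = 1 := by
      have := (hpos (w s) (hw1 s hs)).ne'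
      field_simp
    rw [hval] at hcomp
    have := hcomp.sub (hasDerivWithinAt_id s (Ici 0))
    norm_num at this
    exact this
  intro t ht
  have hwt : F (w t) = t := by
    rcases eq_or_lt_of_le ht with h | h
    · rw [← h, hw0, hFp]
    · have hcont : ContinuousOn (fun u => F (w u) - u) (Icc 0 t) := fun x hx =>
        ((hG x hx.1).continuousWithinAt).mono (fun y hy => hy.1)
      have hder : ∀ x ∈ Ico (0:ℝ) t, HasDerivWithinAt (fun u => F (w u) - u) 0 (Ici x) x :=
        fun x hx => (hG x hx.1).mono (Ici_subset_Ici.2 hx.1)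
      have := constant_of_has_deriv_right_zero hcont hder t (right_mem_Icc.2 ht)
      simp only [hw0, hFp] at this
      linarith
  exact hinj (hw1 t ht) (hvmem t ht) (by rw [hwt, hvF t ht])

end Stmt17Aux

open Topology Stmt17Aux

/-- Deterministic core of the ergodicity result for a strictly subcritical CBI process. -/
theorem stmt_17 (p b : ℝ) (hp : 0 < p) (hb : 0 < b) (φ : ℝ → ℝ)
    (hlip : LocallyLipschitzOn (Set.Icc 0 p) φ)
    (hφ0 : φ 0 = 0)
    (hpos : ∀ z ∈ Set.Ioc (0:ℝ) p, 0 < φ z)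
    (hlim : Filter.Tendsto (fun z => φ z / z) (nhdsWithin 0 (Set.Ioi 0)) (nhds b)) :
    ∃ v : ℝ → ℝ,
      ((∀ t : ℝ, 0 ≤ t → v t ∈ Set.Ioc 0 p) ∧ v 0 = p ∧
        (∀ t : ℝ, 0 ≤ t → HasDerivWithinAt v (-(φ (v t))) (Set.Ici 0) t)) ∧
      StrictAntiOn v (Set.Ici 0) ∧
      Filter.Tendsto v Filter.atTop (nhds 0) ∧
      MeasureTheory.IntegrableOn (fun z => z / φ z) (Set.Ioc 0 p) ∧
      MeasureTheory.IntegrableOn v (Set.Ici 0) ∧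
      (∫ t in Set.Ici (0:ℝ), v t) = ∫ z in Set.Ioc (0:ℝ) p, z / φ z ∧
      (∀ w : ℝ → ℝ,
        ((∀ t : ℝ, 0 ≤ t → w t ∈ Set.Ioc 0 p) ∧ w 0 = p ∧
          (∀ t : ℝ, 0 ≤ t → HasDerivWithinAt w (-(φ (w t))) (Set.Ici 0) t)) →
        ∀ t : ℝ, 0 ≤ t → w t = v t) := by
  have hφc : ContinuousOn φ (Icc 0 p) := hlip.continuousOn
  set F : ℝ → ℝ := Fint φ p with hFdef
  have hFanti : ∀ {z1 z2 : ℝ}, 0 < z1 → z1 < z2 → z2 ≤ p → F z2 < F z1 :=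
    fun h1 h12 h2 => Fint_anti hp hφc hpos h1 h12 h2
  have hFp : F p = 0 := Fint_p
  have hFnn : ∀ {z : ℝ}, z ∈ Ioc (0:ℝ) p → 0 ≤ F z := fun hz => Fint_nonneg hp hφc hpos hz
  have hFdAt : ∀ z ∈ Ioo (0:ℝ) p, HasDerivAt F (-(φ z)⁻¹) z :=
    fun z hz => Fint_hasDerivAt hp hφc hpos hz
  have hFdp : HasDerivWithinAt F (-(φ p)⁻¹) (Iic p) p := Fint_hasDerivWithinAt_p hp hφc hpos
  have hFd : ∀ z ∈ Ioc (0:ℝ) p, HasDerivWithinAt F (-(φ z)⁻¹) (Ioc 0 p) z :=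
    fun z hz => Fint_hasDerivWithin hp hφc hpos hz
  have hFsurj : ∀ t : ℝ, 0 ≤ t → ∃ z ∈ Ioc (0:ℝ) p, F z = t := Fint_surj hp hb hφc hpos hlim
  -- injectivity
  have hinj : ∀ {z1 z2 : ℝ}, z1 ∈ Ioc (0:ℝ) p → z2 ∈ Ioc (0:ℝ) p → F z1 = F z2 → z1 = z2 := by
    intro z1 z2 h1 h2 he
    rcases lt_trichotomy z1 z2 with h | h | h
    · exact absurd he (ne_of_gt (hFanti h1.1 h h2.2))
    · exact h
    · exact absurd he (ne_of_lt (hFanti h2.1 h h1.2))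
  have hch : ∀ t : ℝ, ∃ z, (0 ≤ t → z ∈ Ioc (0:ℝ) p ∧ F z = t) ∧ (¬ 0 ≤ t → z = p) := by
    intro t
    by_cases ht : 0 ≤ t
    · obtain ⟨z, hz, hzt⟩ := hFsurj t ht
      exact ⟨z, fun _ => ⟨hz, hzt⟩, fun h => absurd ht h⟩
    · exact ⟨p, fun h => absurd h ht, fun _ => rfl⟩
  choose v hv using hch
  have hvmem : ∀ t : ℝ, 0 ≤ t → v t ∈ Ioc (0:ℝ) p := fun t ht => ((hv t).1 ht).1
  have hvF : ∀ t : ℝ, 0 ≤ t → F (v t) = t := fun t ht => ((hv t).1 ht).2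
  have hv0 : v 0 = p := hinj (hvmem 0 le_rfl) ⟨hp, le_rfl⟩ (by rw [hvF 0 le_rfl, hFp])
  -- strict antitonicity on Ici 0
  have hanti : StrictAntiOn v (Ici 0) := by
    intro t1 ht1 t2 ht2 h12
    by_contra hcon
    push_neg at hcon
    rcases eq_or_lt_of_le hcon with he | hlt
    · have : t1 = t2 := by rw [← hvF t1 ht1, ← hvF t2 ht2, he]
      linarith
    · have := hFanti (hvmem t1 ht1).1 hlt (hvmem t2 ht2).2
      rw [hvF t1 ht1, hvF t2 ht2] at this
      linarith
  -- global antitone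
  have hvneg : ∀ t : ℝ, t < 0 → v t = p := fun t ht => (hv t).2 (not_le.2 ht)
  have hantiG : Antitone v := by
    intro t1 t2 h12
    rcases lt_or_ge t1 0 with h1 | h1
    · rw [hvneg t1 h1]
      rcases lt_or_ge t2 0 with h2 | h2
      · rw [hvneg t2 h2]
      · exact (hvmem t2 h2).2
    · rcases eq_or_lt_of_le h12 with he | hlt
      · rw [he]
      · exact (hanti h1 (h1.trans h12) hlt).le
  -- v t < p for t > 0
  have hvlt : ∀ t : ℝ, 0 < t → v t < p := by
    intro t ht
    rw [← hv0]; exact hanti (Set.mem_Ici.2 le_rfl) ht.le ht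
  -- continuity within Ici 0
  have hvcont : ∀ t0 : ℝ, 0 ≤ t0 → Tendsto v (𝓝[Ici 0] t0) (𝓝 (v t0)) := by
    intro t0 ht0
    rw [tendsto_order]
    constructor
    · intro a ha
      rcases le_or_gt a 0 with h | h
      · filter_upwards [self_mem_nhdsWithin] with t ht
        exact lt_of_le_of_lt h (hvmem t ht).1
      · have hamem : a ∈ Ioc (0:ℝ) p := ⟨h, ha.le.trans (hvmem t0 ht0).2⟩
        have hs : t0 < F a := by
          have := hFanti h ha (hvmem t0 ht0).2
          rwa [hvF t0 ht0] at this
        filter_upwards [self_mem_nhdsWithin,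
          eventually_nhdsWithin_of_eventually_nhds (eventually_lt_nhds hs)] with t ht hts
        by_contra hcon
        push_neg at hcon
        rcases eq_or_lt_of_le hcon with he | hlt
        · have : t = F a := by rw [← hvF t ht, he]
          linarith
        · have := hFanti (hvmem t ht).1 hlt hamem.2
          rw [hvF t ht] at this
          linarith
    · intro a ha
      rcases lt_or_ge p a with h | h
      · filter_upwards [self_mem_nhdsWithin] with t ht
        exact lt_of_le_of_lt (hvmem t ht).2 h
      · have hamem : a ∈ Ioc (0:ℝ) p := ⟨(hvmem t0 ht0).1.trans ha, h⟩
        have hs : F a < t0 := by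
          have := hFanti (hvmem t0 ht0).1 ha h
          rwa [hvF t0 ht0] at this
        filter_upwards [self_mem_nhdsWithin,
          eventually_nhdsWithin_of_eventually_nhds (eventually_gt_nhds hs)] with t ht hts
        by_contra hcon
        push_neg at hcon
        rcases eq_or_lt_of_le hcon with he | hlt
        · have : t = F a := by rw [← hvF t ht, ← he]
          linarith
        · have := hFanti hamem.1 hlt (hvmem t ht).2
          rw [hvF t ht] at this
          linarith
  -- continuity at t > 0
  have hvca : ∀ t : ℝ, 0 < t → ContinuousAt v t := by
    intro t ht
    have heq : 𝓝[Ici 0] t = 𝓝 t :=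
      nhdsWithin_eq_nhds.2 (mem_of_superset (Ioi_mem_nhds ht) Ioi_subset_Ici_self)
    have := hvcont t ht.le
    rwa [heq] at this
  -- derivative at t > 0
  have hderiv_pos : ∀ t : ℝ, 0 < t → HasDerivAt v (-(φ (v t))) t := by
    intro t ht
    have hz : v t ∈ Ioo 0 p := ⟨(hvmem t ht.le).1, hvlt t ht⟩
    have hφz : 0 < φ (v t) := hpos _ ⟨hz.1, hz.2.le⟩
    have hne : -(φ (v t))⁻¹ ≠ 0 := neg_ne_zero.2 (inv_ne_zero hφz.ne')
    have hfg : ∀ᶠ y in 𝓝 t, F (v y) = y := by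
      filter_upwards [Ioi_mem_nhds ht] with y hy
      exact hvF y (le_of_lt hy)
    have h := HasDerivAt.of_local_left_inverse (hvca t ht) (hFdAt _ hz) hne hfg
    have : (-(φ (v t))⁻¹)⁻¹ = -(φ (v t)) := by
      rw [inv_neg, inv_inv]
    rwa [this] at h
  -- derivative at 0 (from the right) via slopes
  have hderiv0 : HasDerivWithinAt v (-(φ (v 0))) (Ici 0) 0 := by
    rw [hasDerivWithinAt_iff_tendsto_slope]
    have hsetid : Ici (0:ℝ) \ {0} = Ioi 0 := Ici_sdiff_left
    rw [hsetid]
    have hφp : 0 < φ p := hpos p ⟨hp, le_rfl⟩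
    have hFslope : Tendsto (slope F p) (𝓝[Iic p \ {p}] p) (𝓝 (-(φ p)⁻¹)) := by
      rw [← hasDerivWithinAt_iff_tendsto_slope]
      exact hFdp
    have hvt : Tendsto v (𝓝[Ioi 0] 0) (𝓝[Iic p \ {p}] p) := by
      rw [tendsto_nhdsWithin_iff]
      constructor
      · have := hvcont 0 le_rfl
        rw [hv0] at this
        exact this.mono_left (nhdsWithin_mono _ Ioi_subset_Ici_self)
      · filter_upwards [self_mem_nhdsWithin] with t ht
        exact ⟨(hvmem t (le_of_lt ht)).2.trans le_rfl |>.trans le_rfl, (hvlt t ht).ne⟩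
    have hcomp : Tendsto (fun t => slope F p (v t)) (𝓝[Ioi 0] 0) (𝓝 (-(φ p)⁻¹)) :=
      hFslope.comp hvt
    have hinv : Tendsto (fun t => (slope F p (v t))⁻¹) (𝓝[Ioi 0] 0) (𝓝 ((-(φ p)⁻¹)⁻¹)) :=
      hcomp.inv₀ (neg_ne_zero.2 (inv_ne_zero hφp.ne'))
    have hval : (-(φ p)⁻¹)⁻¹ = -(φ (v 0)) := by rw [inv_neg, inv_inv, hv0]
    rw [hval] at hinv
    apply hinv.congr'
    filter_upwards [self_mem_nhdsWithin] with t ht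
    have htpos : (0:ℝ) < t := ht
    rw [slope_def_field, slope_def_field, hvF t htpos.le, hFp, hv0, sub_zero, inv_div]
  -- limit at infinity
  have hlb : ∀ t : ℝ, 0 ≤ v t := by
    intro t
    rcases lt_or_ge t 0 with h | h
    · rw [hvneg t h]; exact hp.le
    · exact (hvmem t h).1.le
  have hbdd : BddBelow (range v) := ⟨0, fun x ⟨t, ht⟩ => ht ▸ hlb t⟩
  have htendv : Tendsto v atTop (𝓝 (⨅ t, v t)) := tendsto_atTop_ciInf hantiG hbdd
  have hinf0 : (⨅ t, v t) = 0 := by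
    have hL0 : 0 ≤ ⨅ t, v t := le_ciInf hlb
    rcases eq_or_lt_of_le hL0 with h | h
    · exact h.symm
    · exfalso
      set L := ⨅ t, v t with hL
      have hLle : ∀ t : ℝ, L ≤ v t := fun t => ciInf_le hbdd t
      have hLp : L ≤ p := (hLle 0).trans_eq hv0
      have hmemL : L ∈ Ioc (0:ℝ) p := ⟨h, hLp⟩
      have hkey : ∀ t : ℝ, 0 ≤ t → t ≤ F L := by
        intro t ht
        rw [← hvF t ht]
        rcases eq_or_lt_of_le (hLle t) with he | hlt
        · rw [← he]
        · exact (hFanti h hlt (hvmem t ht).2).le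
      have := hkey (F L + 1) (by linarith [hFnn hmemL])
      linarith
  rw [hinf0] at htendv
  -- bounded and integrable density
  obtain ⟨M, hM, hgbd, hgint⟩ := gbound hp hb hφc hpos hlim
  have hgpos : ∀ z ∈ Ioc (0:ℝ) p, 0 ≤ z / φ z :=
    fun z hz => div_nonneg hz.1.le (hpos z hz).le
  have hcov := cov hp v hφc hpos hvmem hv0 hvcont hderiv_pos
  obtain ⟨hvint, hintEq⟩ := intEq M hp v hgbd hgint hvmem hlb hvcont htendv hcov hgpos
  refine ⟨v, ⟨hvmem, hv0, ?_⟩, hanti, htendv, hgint, hvint, hintEq, ?_⟩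
  · intro t ht
    rcases eq_or_lt_of_le ht with h | h
    · rw [← h]; exact hderiv0
    · exact (hderiv_pos t h).hasDerivWithinAt
  · intro w ⟨hw1, hw0, hw'⟩
    exact uniq hp F hpos hFp hFd (fun h1 h2 he => hinj h1 h2 he) v hvmem hvF w hw1 hw0 hw'
end
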